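/- arXiv:cond-mat/0703199 — 6 statements merged into one kernel-verified Lean document; each statement's English description precedes it below -/
import Mathlib

section
/- Define Δ(β,J_A) = e_A(β,J_A) + J_A tanh(βJ_A), where e_A(β,J_A) = −⟨J_A∏_{i∈A}S_i⟩_β. Then for J_A ≠ 0, Δ satisfies the identity Δ(β,−J_A) = −Δ(β,J_A) / (1 + (sinh(2βJ_A)/J_A)·Δ(β,J_A)). -/
open Finset Real

/-- Spin value of a Boolean spin variable: `true ↦ 1`, `false ↦ -1`. -/
def spin (b : Bool) : ℝ := if b then 1 else -1

/-- Energy of a finite Ising system: `H(S) = -∑_{A ⊆ V} J_A ∏_{i ∈ A} S_i`. -/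
noncomputable def energy {V : Type*} [Fintype V] [DecidableEq V]
    (J : Finset V → ℝ) (S : V → Bool) : ℝ :=
  -∑ A : Finset V, J A * ∏ i ∈ A, spin (S i)

/-- Partition function `Z(β, J) = ∑_S exp (-β H(S))`. -/
noncomputable def Z {V : Type*} [Fintype V] [DecidableEq V]
    (β : ℝ) (J : Finset V → ℝ) : ℝ :=
  ∑ S : V → Bool, Real.exp (-β * energy J S)

/-- Thermal average `⟨f⟩_β = Z⁻¹ ∑_S f(S) exp (-β H(S))`. -/
noncomputable def texp {V : Type*} [Fintype V] [DecidableEq V]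
    (β : ℝ) (J : Finset V → ℝ) (f : (V → Bool) → ℝ) : ℝ :=
  (∑ S : V → Bool, f S * Real.exp (-β * energy J S)) / Z β J

/-- Thermal average of the local energy of subset `A`:
`e_A(β, J_A) = -⟨J_A ∏_{i ∈ A} S_i⟩_β`. -/
noncomputable def eA {V : Type*} [Fintype V] [DecidableEq V]
    (β : ℝ) (J : Finset V → ℝ) (A : Finset V) : ℝ :=
  texp β J (fun S => -(J A * ∏ i ∈ A, spin (S i)))

/-- Deviation of the local energy from its isolated value:
`Δ(β, J_A) = e_A(β, J_A) + J_A tanh (β J_A)`. -/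
noncomputable def Δ {V : Type*} [Fintype V] [DecidableEq V]
    (β : ℝ) (J : Finset V → ℝ) (A : Finset V) : ℝ :=
  eA β J A + J A * Real.tanh (β * J A)

/-- Couplings with the single coupling `J_A` negated. -/
noncomputable def flipJ {V : Type*} [DecidableEq V]
    (J : Finset V → ℝ) (A : Finset V) : Finset V → ℝ :=
  Function.update J A (-(J A))

/-- the sign-flipJ identity for `Δ`. -/
theorem Delta_flip_identity {V : Type*} [Fintype V] [DecidableEq V]
    (β : ℝ) (J : Finset V → ℝ) (A : Finset V) (hJ : J A ≠ 0) :
    Δ β (flipJ J A) A =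
      -Δ β J A / (1 + Real.sinh (2 * β * J A) / J A * Δ β J A) := by
  classical
  set σ : (V → Bool) → ℝ := fun S => ∏ i ∈ A, spin (S i) with hσ
  set x := β * J A with hx
  set s := Real.sinh x with hs
  set c := Real.cosh x with hc0
  have hc : 0 < c := Real.cosh_pos x
  have hcs : c ^ 2 - s ^ 2 = 1 := Real.cosh_sq_sub_sinh_sq x
  set w : (V → Bool) → ℝ := fun S => Real.exp (-β * energy J S) with hw
  set N := ∑ S : V → Bool, σ S * w S with hN
  have hZ : Z β J = ∑ S : V → Bool, w S := rfl
  have hZpos : 0 < Z β J := by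
    rw [hZ]
    exact Finset.sum_pos (fun S _ => Real.exp_pos _) Finset.univ_nonempty
  have hσsq : ∀ S, σ S * σ S = 1 := by
    intro S
    simp only [hσ, ← Finset.prod_mul_distrib]
    exact Finset.prod_eq_one fun i _ => by cases S i <;> norm_num [spin]
  -- energy decomposition
  have hE : ∀ S, energy (flipJ J A) S = energy J S + 2 * J A * σ S := by
    intro S
    simp only [energy, flipJ]
    have key : ∀ B : Finset V, Function.update J A (-(J A)) B * ∏ i ∈ B, spin (S i)
        = J B * ∏ i ∈ B, spin (S i) - (if B = A then 2 * J A * σ S else 0) := by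
      intro B
      by_cases hB : B = A
      · subst hB; simp [Function.update_self, hσ]; ring
      · simp [Function.update_of_ne hB, hB]
    rw [Finset.sum_congr rfl fun B _ => key B, Finset.sum_sub_distrib,
      Finset.sum_ite_eq' Finset.univ A]
    simp; ring
  -- weight transformation
  have hw' : ∀ S, Real.exp (-β * energy (flipJ J A) S)
      = w S * (Real.cosh (2*x) - Real.sinh (2*x) * σ S) := by
    intro S
    rw [hE S]
    have h1 : -β * (energy J S + 2 * J A * σ S) = -β * energy J S + (2*x) * (-(σ S)) := by
      rw [hx]; ring
    rw [h1, Real.exp_add, hw]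
    congr 1
    rcases mul_self_eq_one_iff.1 (hσsq S) with h | h <;> rw [h]
    · rw [show (2*x) * -(1:ℝ) = -(2*x) by ring, ← Real.cosh_sub_sinh]; ring
    · rw [show (2*x) * -(-1:ℝ) = 2*x by ring, ← Real.cosh_add_sinh]; ring
  -- Z and N transformation
  have hsplit : ∀ (C D : ℝ), ∀ g : (V → Bool) → ℝ,
      ∑ S : V → Bool, g S * (w S * (C - D * σ S))
        = C * (∑ S : V → Bool, g S * w S) - D * (∑ S : V → Bool, g S * (σ S * w S)) := by
    intro C D g
    rw [Finset.mul_sum, Finset.mul_sum, ← Finset.sum_sub_distrib]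
    exact Finset.sum_congr rfl fun S _ => by ring
  have hZ' : Z β (flipJ J A) = Real.cosh (2*x) * Z β J - Real.sinh (2*x) * N := by
    rw [Z]
    simp only [hw']
    have := hsplit (Real.cosh (2*x)) (Real.sinh (2*x)) (fun _ => 1)
    simpa [hZ, hN] using this
  have hZ'pos : 0 < Z β (flipJ J A) := by
    rw [Z]
    exact Finset.sum_pos (fun S _ => Real.exp_pos _) Finset.univ_nonempty
  -- numerator transformation: ∑ σ w' = cosh2x N - sinh2x Z
  have hNum' : ∑ S : V → Bool, σ S * Real.exp (-β * energy (flipJ J A) S)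
      = Real.cosh (2*x) * N - Real.sinh (2*x) * Z β J := by
    simp only [hw']
    have h1 := hsplit (Real.cosh (2*x)) (Real.sinh (2*x)) σ
    have h2 : ∑ S : V → Bool, σ S * (σ S * w S) = ∑ S : V → Bool, w S :=
      Finset.sum_congr rfl fun S _ => by rw [← mul_assoc, hσsq S, one_mul]
    rw [h1, h2, ← hZ, ← hN]
  -- eA formulas
  have heA : eA β J A = -(J A * N) / Z β J := by
    rw [eA, texp]
    congr 1
    rw [hN, Finset.mul_sum, ← Finset.sum_neg_distrib]
    exact Finset.sum_congr rfl fun S _ => by simp only [hσ, hw]; ring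
  have hflipA : flipJ J A A = -(J A) := by simp [flipJ]
  have heA' : eA β (flipJ J A) A
      = (J A * (Real.cosh (2*x) * N - Real.sinh (2*x) * Z β J)) / Z β (flipJ J A) := by
    rw [eA, texp]
    congr 1
    rw [← hNum', Finset.mul_sum]
    refine Finset.sum_congr rfl fun S _ => ?_
    rw [hflipA]
    simp only [hσ]; ring
  -- tanh values
  have ht : Real.tanh x = s / c := Real.tanh_eq_sinh_div_cosh x
  have ht' : flipJ J A A * Real.tanh (β * flipJ J A A) = J A * (s / c) := by
    rw [hflipA, show β * -(J A) = -x by rw [hx]; ring, Real.tanh_neg, ht]; ring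
  -- hyperbolic doubling
  have hc2 : Real.cosh (2*x) = c^2 + s^2 := Real.cosh_two_mul x
  have hs2 : Real.sinh (2*x) = 2 * s * c := Real.sinh_two_mul x
  have h2x : 2 * β * J A = 2 * x := by rw [hx]; ring
  -- unfold Δ
  have hΔ : Δ β J A = -(J A * N) / Z β J + J A * (s / c) := by
    rw [Δ, heA, ← hx, ht]
  have hΔ' : Δ β (flipJ J A) A
      = (J A * (Real.cosh (2*x) * N - Real.sinh (2*x) * Z β J)) / Z β (flipJ J A)
        + J A * (s / c) := by
    rw [Δ, heA', ht']
  -- denominator equals Z'/Z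
  have hden : 1 + Real.sinh (2 * β * J A) / J A * Δ β J A = Z β (flipJ J A) / Z β J := by
    rw [h2x, hs2, hΔ, hZ', hc2, hs2]
    field_simp
    linear_combination (-Z β J) * hcs
  have hZ'2 : Z β (flipJ J A) = (c^2+s^2) * Z β J - 2*s*c*N := by rw [hZ', hc2, hs2]
  have hZ'ne : (c^2+s^2) * Z β J - 2*s*c*N ≠ 0 := by rw [← hZ'2]; exact hZ'pos.ne'
  rw [hden, hΔ', hΔ, div_div_eq_mul_div, hc2, hs2, hZ'2]
  field_simp [hZ'ne, hc.ne', hZpos.ne']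
  have hD' : (c^2+s^2)*Z β J - c*s*N*2 ≠ 0 := by
    rw [show (c^2+s^2)*Z β J - c*s*N*2 = (c^2+s^2) * Z β J - 2*s*c*N by ring]; exact hZ'ne
  rw [eq_neg_iff_add_eq_zero, div_add' _ _ _ hD', ← add_div, div_eq_zero_iff]
  left
  linear_combination (c*N - s*Z β J) * hcs
end

section
/- With Δ(β,J_A) = e_A(β,J_A) + J_A tanh(βJ_A) and J_A ≠ 0, the quantities Δ(β,J_A) and Δ(β,−J_A) have opposite signs (their product is ≤ 0), and Δ(β,J_A) = 0 if and only if Δ(β,−J_A) = 0. -/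
open Finset Real

lemma spin_mul_self (b : Bool) : spin b * spin b = 1 := by cases b <;> simp [spin]

lemma prod_spin_mul_self {V : Type*} [DecidableEq V] (A : Finset V) (S : V → Bool) :
    (∏ i ∈ A, spin (S i)) * (∏ i ∈ A, spin (S i)) = 1 := by
  rw [← Finset.prod_mul_distrib]
  exact Finset.prod_eq_one fun i _ => spin_mul_self _

lemma prod_spin_cases {V : Type*} [DecidableEq V] (A : Finset V) (S : V → Bool) :
    (∏ i ∈ A, spin (S i)) = 1 ∨ (∏ i ∈ A, spin (S i)) = -1 :=
  mul_self_eq_one_iff.mp (prod_spin_mul_self A S)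

lemma energy_update {V : Type*} [Fintype V] [DecidableEq V]
    (J : Finset V → ℝ) (A : Finset V) (a : ℝ) (S : V → Bool) :
    energy (Function.update J A a) S
      = energy (Function.update J A 0) S - a * ∏ i ∈ A, spin (S i) := by
  unfold energy
  rw [← Finset.add_sum_erase _ _ (Finset.mem_univ A),
      ← Finset.add_sum_erase _ (fun B => Function.update J A 0 B * ∏ i ∈ B, spin (S i))
        (Finset.mem_univ A)]
  simp only [Function.update_self]
  rw [Finset.sum_congr rfl (fun B hB => by
    rw [Function.update_of_ne (Finset.ne_of_mem_erase hB),
        ← Function.update_of_ne (Finset.ne_of_mem_erase hB) (0:ℝ) J])]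
  ring

lemma exp_energy_update {V : Type*} [Fintype V] [DecidableEq V]
    (β : ℝ) (J : Finset V → ℝ) (A : Finset V) (a : ℝ) (S : V → Bool) :
    Real.exp (-β * energy (Function.update J A a) S)
      = (Real.cosh (β*a) + (∏ i ∈ A, spin (S i)) * Real.sinh (β*a)) *
        Real.exp (-β * energy (Function.update J A 0) S) := by
  rw [energy_update]
  have h : -β * (energy (Function.update J A 0) S - a * ∏ i ∈ A, spin (S i))
      = β * a * (∏ i ∈ A, spin (S i)) + -β * energy (Function.update J A 0) S := by ring
  rw [h, Real.exp_add]
  rcases prod_spin_cases A S with h1 | h1 <;> rw [h1]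
  · rw [mul_one, one_mul, Real.cosh_add_sinh]
  · rw [mul_neg_one, neg_one_mul, ← Real.cosh_sub_sinh]
    ring

noncomputable def T0 {V : Type*} [Fintype V] [DecidableEq V]
    (β : ℝ) (J : Finset V → ℝ) (A : Finset V) : ℝ :=
  ∑ S : V → Bool, Real.exp (-β * energy (Function.update J A 0) S)

noncomputable def T1 {V : Type*} [Fintype V] [DecidableEq V]
    (β : ℝ) (J : Finset V → ℝ) (A : Finset V) : ℝ :=
  ∑ S : V → Bool, (∏ i ∈ A, spin (S i)) * Real.exp (-β * energy (Function.update J A 0) S)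

lemma Z_pos {V : Type*} [Fintype V] [DecidableEq V] (β : ℝ) (J : Finset V → ℝ) :
    0 < Z β J :=
  Finset.sum_pos (fun S _ => Real.exp_pos _) Finset.univ_nonempty

lemma Z_formula {V : Type*} [Fintype V] [DecidableEq V]
    (β : ℝ) (J : Finset V → ℝ) (A : Finset V) (a : ℝ) :
    Z β (Function.update J A a)
      = Real.cosh (β*a) * T0 β J A + Real.sinh (β*a) * T1 β J A := by
  unfold Z T0 T1
  rw [Finset.sum_congr rfl (fun S _ => exp_energy_update β J A a S)]
  rw [show (fun S => (Real.cosh (β*a) + (∏ i ∈ A, spin (S i)) * Real.sinh (β*a)) *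
        Real.exp (-β * energy (Function.update J A 0) S))
      = (fun S => Real.cosh (β*a) * Real.exp (-β * energy (Function.update J A 0) S)
          + Real.sinh (β*a) * ((∏ i ∈ A, spin (S i)) *
            Real.exp (-β * energy (Function.update J A 0) S))) from funext fun S => by ring]
  rw [Finset.sum_add_distrib, ← Finset.mul_sum, ← Finset.mul_sum]

lemma num_formula {V : Type*} [Fintype V] [DecidableEq V]
    (β : ℝ) (J : Finset V → ℝ) (A : Finset V) (a : ℝ) :
    ∑ S : V → Bool, (-(a * ∏ i ∈ A, spin (S i))) *
        Real.exp (-β * energy (Function.update J A a) S)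
      = -(a * (Real.cosh (β*a) * T1 β J A + Real.sinh (β*a) * T0 β J A)) := by
  unfold T0 T1
  have hpt : ∀ S : V → Bool,
      (-(a * ∏ i ∈ A, spin (S i))) * Real.exp (-β * energy (Function.update J A a) S)
      = -(a * Real.cosh (β*a)) * ((∏ i ∈ A, spin (S i)) *
            Real.exp (-β * energy (Function.update J A 0) S))
        + -(a * Real.sinh (β*a)) * Real.exp (-β * energy (Function.update J A 0) S) := by
    intro S
    rw [exp_energy_update β J A a S]
    linear_combination (-(a * Real.sinh (β*a) *
      Real.exp (-β * energy (Function.update J A 0) S))) * prod_spin_mul_self A S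
  rw [Finset.sum_congr rfl (fun S _ => hpt S),
    Finset.sum_add_distrib, ← Finset.mul_sum, ← Finset.mul_sum]
  ring

lemma Delta_formula {V : Type*} [Fintype V] [DecidableEq V]
    (β : ℝ) (J : Finset V → ℝ) (A : Finset V) (a : ℝ) :
    Δ β (Function.update J A a) A
      = -(a * T1 β J A) / (Real.cosh (β*a) * Z β (Function.update J A a)) := by
  have hc : 0 < Real.cosh (β*a) := Real.cosh_pos _
  have hZ : 0 < Z β (Function.update J A a) := Z_pos β _
  have hZf := Z_formula β J A a
  unfold Δ eA texp
  rw [Function.update_self, Real.tanh_eq_sinh_div_cosh, num_formula β J A a, hZf]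
  rw [hZf] at hZ
  rw [mul_div_assoc', div_add_div _ _ hZ.ne' hc.ne', div_eq_div_iff (by positivity) (by positivity)]
  linear_combination (-(a * T1 β J A * Real.cosh (β*a) *
    (Real.cosh (β*a) * T0 β J A + Real.sinh (β*a) * T1 β J A))) *
    Real.cosh_sq_sub_sinh_sq (β*a)

/-- `Δ(β,J_A)` and `Δ(β,-J_A)` have opposite signs, and one
vanishes iff the other does. -/
theorem Delta_opposite_signs {V : Type*} [Fintype V] [DecidableEq V]
    (β : ℝ) (J : Finset V → ℝ) (A : Finset V) (hJ : J A ≠ 0) :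
    Δ β J A * Δ β (flipJ J A) A ≤ 0 ∧
    (Δ β J A = 0 ↔ Δ β (flipJ J A) A = 0) := by
  have hc : 0 < Real.cosh (β * J A) := Real.cosh_pos _
  have hZ1 : 0 < Z β J := Z_pos β J
  have hZ2 : 0 < Z β (flipJ J A) := Z_pos β _
  have h1 : Δ β J A = -(J A * T1 β J A) / (Real.cosh (β * J A) * Z β J) := by
    have := Delta_formula β J A (J A)
    rwa [Function.update_eq_self] at this
  have h2 : Δ β (flipJ J A) A
      = (J A * T1 β J A) / (Real.cosh (β * J A) * Z β (flipJ J A)) := by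
    have := Delta_formula β J A (-(J A))
    rw [show Function.update J A (-(J A)) = flipJ J A from rfl, mul_neg,
      Real.cosh_neg, neg_mul, neg_neg] at this
    exact this
  have hd1 : Real.cosh (β * J A) * Z β J ≠ 0 := (mul_pos hc hZ1).ne'
  have hd2 : Real.cosh (β * J A) * Z β (flipJ J A) ≠ 0 := (mul_pos hc hZ2).ne'
  constructor
  · rw [h1, h2, div_mul_div_comm]
    apply div_nonpos_of_nonpos_of_nonneg
    · nlinarith [sq_nonneg (J A * T1 β J A)]
    · positivity
  · rw [h1, h2, div_eq_zero_iff, div_eq_zero_iff]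
    simp [hd1, hd2]
end

section
/- With Δ(β,J_A) = e_A(β,J_A) + J_A tanh(βJ_A) and J_A ≠ 0, the sum satisfies Δ(β,J_A) + Δ(β,−J_A) = (sinh(2βJ_A)/J_A)·Δ(β,J_A)² / (1 + (sinh(2βJ_A)/J_A)·Δ(β,J_A)), and in particular for β > 0 and any J_A ≠ 0, Δ(β,J_A) + Δ(β,−J_A) ≥ 0. -/
open Finset Real

private lemma alg1 (J c s W M : ℝ) (hc : c ≠ 0) (hD : c*W + s*M ≠ 0) (hcs : c^2 - s^2 = 1) :
    -J * (c*M + s*W) / (c*W + s*M) + J * (s/c) = -J * M / (c * (c*W+s*M)) := by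
  rw [← mul_div_assoc, div_add_div _ _ hD hc, div_eq_div_iff (mul_ne_zero hD hc) (mul_ne_zero hc hD)]
  linear_combination (-(J * M * c * (c * W + s * M))) * hcs
private lemma alg2 (J c s W M : ℝ) (hc : c ≠ 0) (hD : c*W - s*M ≠ 0) (hcs : c^2 - s^2 = 1) :
    J * (c*M - s*W) / (c*W - s*M) + J * (s/c) = J * M / (c * (c*W-s*M)) := by
  rw [← mul_div_assoc, div_add_div _ _ hD hc, div_eq_div_iff (mul_ne_zero hD hc) (mul_ne_zero hc hD)]
  linear_combination (J * M * c * (c * W - s * M)) * hcs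
private lemma alg3 (J c s W M : ℝ) (hJ : J ≠ 0) (hc : 0 < c) (hD1 : 0 < c*W+s*M) (hD2 : 0 < c*W - s*M) :
    -J*M/(c*(c*W+s*M)) + J*M/(c*(c*W-s*M)) =
      2*s*c/J * (-J*M/(c*(c*W+s*M)))^2 / (1 + 2*s*c/J * (-J*M/(c*(c*W+s*M)))) := by
  have hden : 1 + 2*s*c/J * (-J*M/(c*(c*W+s*M))) = (c*W-s*M)/(c*W+s*M) := by
    field_simp
    ring
  rw [hden, div_div_eq_mul_div, div_pow]
  have h1 := hD1.ne'
  have h2 := hD2.ne'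
  have h3 := hc.ne'
  rw [div_add_div _ _ (mul_ne_zero hc.ne' h1) (mul_ne_zero hc.ne' h2),
    div_eq_div_iff (mul_ne_zero (mul_ne_zero hc.ne' h1) (mul_ne_zero hc.ne' h2)) h2,
    div_mul_div_comm, div_mul_eq_mul_div, div_mul_eq_mul_div, eq_div_iff (by positivity)]
  ring
private lemma alg4 (J c s W M : ℝ) (hJ : J ≠ 0) (hc : 0 < c) (hD1 : 0 < c*W+s*M) (hD2 : 0 < c*W - s*M) :
    -J*M/(c*(c*W+s*M)) + J*M/(c*(c*W-s*M)) =
      2*(J*s)*M^2/(c*(c*W+s*M)*(c*W-s*M)) := by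
  rw [div_add_div _ _ (mul_ne_zero hc.ne' hD1.ne') (mul_ne_zero hc.ne' hD2.ne'),
    div_eq_div_iff (mul_ne_zero (mul_ne_zero hc.ne' hD1.ne') (mul_ne_zero hc.ne' hD2.ne'))
      (mul_ne_zero (mul_ne_zero hc.ne' hD1.ne') hD2.ne')]
  ring

/-- formula for `Δ(β,J_A) + Δ(β,-J_A)` and its nonnegativity
for `β > 0`. -/
theorem Delta_sum_formula {V : Type*} [Fintype V] [DecidableEq V]
    (β : ℝ) (J : Finset V → ℝ) (A : Finset V) (hJ : J A ≠ 0) :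
    Δ β J A + Δ β (flipJ J A) A =
      Real.sinh (2 * β * J A) / J A * (Δ β J A) ^ 2 /
        (1 + Real.sinh (2 * β * J A) / J A * Δ β J A) ∧
    (0 < β → 0 ≤ Δ β J A + Δ β (flipJ J A) A) := by
  classical
  haveI hne : Nonempty (V → Bool) := ⟨fun _ => true⟩
  set c := Real.cosh (β * J A) with hc
  set s := Real.sinh (β * J A) with hs
  set R : (V → Bool) → ℝ :=
      fun S => ∑ B ∈ Finset.univ.erase A, J B * ∏ i ∈ B, spin (S i) with hRdef
  set w : (V → Bool) → ℝ := fun S => Real.exp (β * R S) with hwdef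
  set W := ∑ S : V → Bool, w S with hWdef
  set M := ∑ S : V → Bool, (∏ i ∈ A, spin (S i)) * w S with hMdef
  have hc0 : 0 < c := by rw [hc]; exact Real.cosh_pos _
  have hKpm : ∀ S : V → Bool,
      (∏ i ∈ A, spin (S i)) = 1 ∨ (∏ i ∈ A, spin (S i)) = -1 := by
    intro S
    refine Finset.prod_induction _ (fun x => x = 1 ∨ x = -1) ?_ (Or.inl rfl) ?_
    · rintro a b (ha | ha) (hb | hb) <;> simp [ha, hb]
    · intro i _
      by_cases h : S i <;> simp [spin, h]
  have hKsq : ∀ S : V → Bool,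
      (∏ i ∈ A, spin (S i)) * (∏ i ∈ A, spin (S i)) = 1 := by
    intro S; rcases hKpm S with h | h <;> rw [h] <;> norm_num
  have hsplit : ∀ S : V → Bool,
      energy J S = -(J A * ∏ i ∈ A, spin (S i)) - R S := by
    intro S
    rw [energy, ← Finset.add_sum_erase Finset.univ
        (fun B => J B * ∏ i ∈ B, spin (S i)) (Finset.mem_univ A)]
    simp only [hRdef]
    ring
  have hflipA : flipJ J A A = -(J A) := Function.update_self _ _ _
  have hsplit' : ∀ S : V → Bool,
      energy (flipJ J A) S = J A * (∏ i ∈ A, spin (S i)) - R S := by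
    intro S
    rw [energy, ← Finset.add_sum_erase Finset.univ
        (fun B => flipJ J A B * ∏ i ∈ B, spin (S i)) (Finset.mem_univ A)]
    have h2 : ∑ B ∈ Finset.univ.erase A, flipJ J A B * ∏ i ∈ B, spin (S i)
        = R S := by
      rw [hRdef]
      refine Finset.sum_congr rfl fun B hB => ?_
      rw [flipJ, Function.update_of_ne (Finset.ne_of_mem_erase hB)]
    rw [hflipA, h2]
    ring
  have hexp : ∀ S : V → Bool,
      Real.exp (-β * energy J S) = (c + s * ∏ i ∈ A, spin (S i)) * w S := by
    intro S
    rw [hsplit S, show -β * (-(J A * ∏ i ∈ A, spin (S i)) - R S)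
        = β * J A * (∏ i ∈ A, spin (S i)) + β * R S by ring, Real.exp_add]
    rcases hKpm S with h | h <;> rw [h]
    · rw [mul_one, mul_one, ← Real.cosh_add_sinh]
    · rw [show β * J A * (-1) = -(β * J A) by ring, ← Real.cosh_sub_sinh]
      simp only [hc, hs, hwdef]; ring
  have hexp' : ∀ S : V → Bool,
      Real.exp (-β * energy (flipJ J A) S)
        = (c - s * ∏ i ∈ A, spin (S i)) * w S := by
    intro S
    rw [hsplit' S, show -β * (J A * (∏ i ∈ A, spin (S i)) - R S)
        = -(β * J A) * (∏ i ∈ A, spin (S i)) + β * R S by ring, Real.exp_add]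
    rcases hKpm S with h | h <;> rw [h]
    · rw [mul_one, mul_one, ← Real.cosh_sub_sinh]
    · rw [show -(β * J A) * (-1) = β * J A by ring, ← Real.cosh_add_sinh]
      simp only [hc, hs, hwdef]; ring
  have hZ : Z β J = c * W + s * M := by
    rw [Z, hWdef, hMdef, Finset.mul_sum, Finset.mul_sum, ← Finset.sum_add_distrib]
    refine Finset.sum_congr rfl fun S _ => ?_
    rw [hexp S]; ring
  have hZ' : Z β (flipJ J A) = c * W - s * M := by
    rw [Z, hWdef, hMdef, Finset.mul_sum, Finset.mul_sum, ← Finset.sum_sub_distrib]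
    refine Finset.sum_congr rfl fun S _ => ?_
    rw [hexp' S]; ring
  have hZpos : 0 < Z β J :=
    Finset.sum_pos (fun S _ => Real.exp_pos _) Finset.univ_nonempty
  have hZpos' : 0 < Z β (flipJ J A) :=
    Finset.sum_pos (fun S _ => Real.exp_pos _) Finset.univ_nonempty
  have hD1 : 0 < c * W + s * M := hZ ▸ hZpos
  have hD2 : 0 < c * W - s * M := hZ' ▸ hZpos'
  have hN : (∑ S : V → Bool, (-(J A * ∏ i ∈ A, spin (S i)))
        * Real.exp (-β * energy J S)) = -(J A) * (c * M + s * W) := by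
    have h0 : (∑ S : V → Bool, (-(J A * ∏ i ∈ A, spin (S i)))
        * Real.exp (-β * energy J S))
        = ∑ S : V → Bool, (-(J A) * c * ((∏ i ∈ A, spin (S i)) * w S)
            + -(J A) * s * w S) :=
      Finset.sum_congr rfl fun S _ => by
        rw [hexp S]; linear_combination (-(J A) * s * w S) * hKsq S
    rw [h0, Finset.sum_add_distrib, ← Finset.mul_sum, ← Finset.mul_sum,
      ← hMdef, ← hWdef]
    ring
  have hN' : (∑ S : V → Bool, (-(flipJ J A A * ∏ i ∈ A, spin (S i)))
        * Real.exp (-β * energy (flipJ J A) S)) = J A * (c * M - s * W) := by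
    have h0 : (∑ S : V → Bool, (-(flipJ J A A * ∏ i ∈ A, spin (S i)))
        * Real.exp (-β * energy (flipJ J A) S))
        = ∑ S : V → Bool, (J A * c * ((∏ i ∈ A, spin (S i)) * w S)
            + -(J A) * s * w S) :=
      Finset.sum_congr rfl fun S _ => by
        rw [hexp' S, hflipA]; linear_combination (-(J A) * s * w S) * hKsq S
    rw [h0, Finset.sum_add_distrib, ← Finset.mul_sum, ← Finset.mul_sum,
      ← hMdef, ← hWdef]
    ring
  have hcs : c ^ 2 - s ^ 2 = 1 := by
    rw [hc, hs]; exact Real.cosh_sq_sub_sinh_sq (β * J A)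
  have hΔ : Δ β J A = -(J A) * M / (c * (c * W + s * M)) := by
    rw [Δ, eA, texp, hN, hZ, Real.tanh_eq_sinh_div_cosh, ← hs, ← hc]
    exact alg1 (J A) c s W M hc0.ne' hD1.ne' hcs
  have hΔ' : Δ β (flipJ J A) A = J A * M / (c * (c * W - s * M)) := by
    rw [Δ, eA, texp, hN', hZ', hflipA,
      show β * -(J A) = -(β * J A) by ring, Real.tanh_neg,
      Real.tanh_eq_sinh_div_cosh, ← hs, ← hc]
    have := alg2 (J A) c s W M hc0.ne' hD2.ne' hcs
    linear_combination this
  have hsinh2 : Real.sinh (2 * β * J A) = 2 * s * c := by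
    rw [show 2 * β * J A = 2 * (β * J A) by ring, Real.sinh_two_mul, hs, hc]
  constructor
  · rw [hΔ, hΔ', hsinh2]
    exact alg3 (J A) c s W M hJ hc0 hD1 hD2
  · intro hβ
    have hJs : 0 < J A * s := by
      rcases hJ.lt_or_gt with h | h
      · have hss : s < 0 := by
          rw [hs]; exact Real.sinh_neg_iff.2 (by nlinarith)
        exact mul_pos_of_neg_of_neg h hss
      · have hss : 0 < s := by
          rw [hs]; exact Real.sinh_pos_iff.2 (by nlinarith)
        exact mul_pos h hss
    rw [hΔ, hΔ', alg4 (J A) c s W M hJ hc0 hD1 hD2]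
    apply div_nonneg
    · exact mul_nonneg (by linarith) (sq_nonneg M)
    · exact le_of_lt (mul_pos (mul_pos hc0 hD1) hD2)
end

section
/- Consider a finite Ising system containing a triangle with ±J couplings and let e_TR(β,i) = e_{12}(β,i) + e_{23}(β,i) + e_{31}(β,i) denote the thermal-average triangle energy in bond configuration i, where configurations 1–4 are the four unfrustrated sign assignments of the triangle couplings (all other couplings fixed). Then (1/4)∑_{i=1}^{4} e_TR(β,i) ≥ −3J·(e^{2βJ} − e^{−2βJ})/(e^{2βJ} + 3e^{−2βJ}) for all β > 0. -/
open Finset Real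

/-- The four unfrustrated sign assignments of the triangle couplings. -/
def signsU : Fin 4 → Fin 3 → ℝ :=
  ![![1, 1, 1], ![1, -1, -1], ![-1, 1, -1], ![-1, -1, 1]]

/-- Index of the unfrustrated pattern matching spins. -/
def idx3 (sa sb sc : Bool) : Fin 4 :=
  if sa = sb then (if sb = sc then 0 else 1) else (if sb = sc then 2 else 3)

lemma tval_eq (i : Fin 4) (sa sb sc : Bool) :
    signsU i 0 * (spin sa * spin sb) + signsU i 1 * (spin sb * spin sc) +
      signsU i 2 * (spin sc * spin sa) = if idx3 sa sb sc = i then 3 else -1 := by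
  fin_cases i <;> cases sa <;> cases sb <;> cases sc <;>
    norm_num [signsU, spin, idx3, Matrix.cons_val, Fin.ext_iff, Matrix.cons_val_two, Matrix.tail_cons] <;>
    (try split) <;> first
      | rfl
      | exact absurd ‹_› (by decide)
      | (rename_i h; exact absurd (by decide) h)

lemma tangent_bound (E F A B : ℝ) (hF : 0 < F) (hEF : F ≤ E) (hA : 0 ≤ A)
    (hB : 0 ≤ B) (hAB : 0 < A + B) :
    (3*E*A - F*B)/(E*A + F*B) ≤
      3*(E-F)/(E+3*F) + 16*E*F*(3*A-B)/((E+3*F)^2*(A+B)) := by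
  have hE : 0 < E := lt_of_lt_of_le hF hEF
  have hD : 0 < E*A + F*B := by nlinarith
  have hE3F : 0 < E + 3*F := by linarith
  have key : 3*(E-F)/(E+3*F) + 16*E*F*(3*A-B)/((E+3*F)^2*(A+B))
      - (3*E*A - F*B)/(E*A + F*B)
      = 4*E*F*(E-F)*(3*A-B)^2 / ((E+3*F)^2*(A+B)*(E*A+F*B)) := by
    field_simp
    ring
  have hnum : 0 ≤ 4*E*F*(E-F)*(3*A-B)^2 :=
    mul_nonneg (mul_nonneg (by positivity) (by linarith)) (by positivity)
  have hden : 0 ≤ (E+3*F)^2*(A+B)*(E*A+F*B) := by positivity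
  have := div_nonneg hnum hden
  linarith

/-- average of the triangle energy over the four unfrustrated
bond configurations is bounded below by the isolated unfrustrated triangle
energy. -/
theorem unfrustrated_average_bound {V : Type*} [Fintype V] [DecidableEq V]
    (β J0 : ℝ) (hβ : 0 < β) (hJ : 0 < J0) (a b c : V)
    (hab : a ≠ b) (hbc : b ≠ c) (hca : c ≠ a)
    (K : Fin 4 → Finset V → ℝ)
    (hKab : ∀ i, K i {a, b} = signsU i 0 * J0)
    (hKbc : ∀ i, K i {b, c} = signsU i 1 * J0)
    (hKca : ∀ i, K i {c, a} = signsU i 2 * J0)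
    (hoff : ∀ i j, ∀ B : Finset V,
      B ≠ {a, b} → B ≠ {b, c} → B ≠ {c, a} → K i B = K j B) :
    (1 / 4) * ∑ i : Fin 4,
        (eA β (K i) {a, b} + eA β (K i) {b, c} + eA β (K i) {c, a}) ≥
      -3 * J0 * (Real.exp (2 * β * J0) - Real.exp (-(2 * β * J0))) /
        (Real.exp (2 * β * J0) + 3 * Real.exp (-(2 * β * J0))) := by
  classical
  set x : ℝ := β * J0 with hx
  have hxpos : 0 < x := mul_pos hβ hJ
  have hac : a ≠ c := fun h => hca h.symm
  -- the three bond sets are distinct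
  have h1 : ({a, b} : Finset V) ≠ {b, c} := by
    intro h
    have ha : a ∈ ({b, c} : Finset V) := by rw [← h]; simp
    simp only [Finset.mem_insert, Finset.mem_singleton] at ha
    rcases ha with h' | h'
    exacts [hab h', hac h']
  have h2 : ({a, b} : Finset V) ≠ {c, a} := by
    intro h
    have hb : b ∈ ({c, a} : Finset V) := by rw [← h]; simp
    simp only [Finset.mem_insert, Finset.mem_singleton] at hb
    rcases hb with h' | h'
    exacts [hbc h', hab h'.symm]
  have h3 : ({b, c} : Finset V) ≠ {c, a} := by
    intro h
    have hb : b ∈ ({c, a} : Finset V) := by rw [← h]; simp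
    simp only [Finset.mem_insert, Finset.mem_singleton] at hb
    rcases hb with h' | h'
    exacts [hbc h', hab h'.symm]
  set T : Finset (Finset V) := {{a, b}, {b, c}, {c, a}} with hT
  set R : (V → Bool) → ℝ :=
    fun S => ∑ B ∈ Finset.univ \ T, K 0 B * ∏ v ∈ B, spin (S v) with hR
  set w : (V → Bool) → ℝ := fun S => Real.exp (β * R S) with hw
  have hwpos : ∀ S : V → Bool, 0 < w S := fun S => Real.exp_pos _
  -- exponent factorization
  have hen : ∀ (i : Fin 4) (S : V → Bool),
      Real.exp (-β * energy (K i) S)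
        = Real.exp (x * (if idx3 (S a) (S b) (S c) = i then 3 else -1)) * w S := by
    intro i S
    have hsum : ∑ B : Finset V, K i B * ∏ v ∈ B, spin (S v)
        = R S + (K i {a, b} * (spin (S a) * spin (S b)) +
            (K i {b, c} * (spin (S b) * spin (S c)) +
             K i {c, a} * (spin (S c) * spin (S a)))) := by
      rw [← Finset.sum_sdiff (Finset.subset_univ T)]
      congr 1
      · apply Finset.sum_congr rfl
        intro B hB
        simp only [hT, Finset.mem_sdiff, Finset.mem_insert, Finset.mem_singleton] at hB
        push_neg at hB
        rw [hoff i 0 B hB.2.1 hB.2.2.1 hB.2.2.2]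
      · rw [hT, Finset.sum_insert (by simp [h1, h2]),
          Finset.sum_insert (by simp [h3]), Finset.sum_singleton,
          Finset.prod_pair hab, Finset.prod_pair hbc, Finset.prod_pair hca]
    have hexp : -β * energy (K i) S
        = x * (if idx3 (S a) (S b) (S c) = i then 3 else -1) + β * R S := by
      have ht := tval_eq i (S a) (S b) (S c)
      rw [← ht]
      simp only [energy]
      rw [hsum, hKab i, hKbc i, hKca i, hx]
      ring
    rw [hexp, Real.exp_add, hw]
  -- weights of the four pattern classes
  set AA : Fin 4 → ℝ :=
    fun i => ∑ S : V → Bool, if idx3 (S a) (S b) (S c) = i then w S else 0 with hAA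
  set BB : Fin 4 → ℝ :=
    fun i => ∑ S : V → Bool, if idx3 (S a) (S b) (S c) = i then 0 else w S with hBB
  set W : ℝ := ∑ S : V → Bool, w S with hW
  have hsplitsum : ∀ (c1 c2 : ℝ) (i : Fin 4),
      c1 * AA i + c2 * BB i
        = ∑ S : V → Bool,
            (if idx3 (S a) (S b) (S c) = i then c1 * w S else c2 * w S) := by
    intro c1 c2 i
    simp only [hAA, hBB]
    rw [Finset.mul_sum, Finset.mul_sum, ← Finset.sum_add_distrib]
    refine Finset.sum_congr rfl fun S _ => ?_
    split_ifs <;> ring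
  have hZeq : ∀ i : Fin 4,
      Z β (K i) = Real.exp (x*3) * AA i + Real.exp (x*(-1)) * BB i := by
    intro i
    rw [hsplitsum]
    simp only [Z]
    refine Finset.sum_congr rfl fun S _ => ?_
    rw [hen i S]
    split_ifs <;> rfl
  have hnum : ∀ i : Fin 4,
      eA β (K i) {a, b} + eA β (K i) {b, c} + eA β (K i) {c, a}
        = (-(3*J0) * Real.exp (x*3) * AA i + J0 * Real.exp (x*(-1)) * BB i) /
            Z β (K i) := by
    intro i
    simp only [eA, texp]
    rw [← add_div, ← add_div]
    congr 1
    have : -(3*J0) * Real.exp (x*3) * AA i + J0 * Real.exp (x*(-1)) * BB i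
        = (-(3*J0) * Real.exp (x*3)) * AA i + (J0 * Real.exp (x*(-1))) * BB i := by
      ring
    rw [this, hsplitsum]
    rw [← Finset.sum_add_distrib, ← Finset.sum_add_distrib]
    refine Finset.sum_congr rfl fun S _ => ?_
    rw [hen i S, Finset.prod_pair hab, Finset.prod_pair hbc, Finset.prod_pair hca,
      hKab i, hKbc i, hKca i]
    have ht := tval_eq i (S a) (S b) (S c)
    by_cases h : idx3 (S a) (S b) (S c) = i
    · rw [if_pos h] at ht ⊢
      rw [if_pos h]
      linear_combination (-(J0) * (Real.exp (x*3) * w S)) * ht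
    · rw [if_neg h] at ht ⊢
      rw [if_neg h]
      linear_combination (-(J0) * (Real.exp (x*(-1)) * w S)) * ht
  -- basic facts about the weights
  have hAnn : ∀ i : Fin 4, 0 ≤ AA i := by
    intro i
    refine Finset.sum_nonneg fun S _ => ?_
    split_ifs
    · exact (hwpos S).le
    · exact le_refl 0
  have hBnn : ∀ i : Fin 4, 0 ≤ BB i := by
    intro i
    refine Finset.sum_nonneg fun S _ => ?_
    split_ifs
    · exact le_refl 0
    · exact (hwpos S).le
  have hABW : ∀ i : Fin 4, AA i + BB i = W := by
    intro i
    simp only [hAA, hBB, hW]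
    rw [← Finset.sum_add_distrib]
    refine Finset.sum_congr rfl fun S _ => ?_
    split_ifs <;> ring
  have hsumA : ∑ i : Fin 4, AA i = W := by
    simp only [hAA, hW]
    rw [Finset.sum_comm]
    refine Finset.sum_congr rfl fun S _ => ?_
    simp [Finset.sum_ite_eq]
  have hWpos : 0 < W := Finset.sum_pos (fun S _ => hwpos S) Finset.univ_nonempty
  -- the two exponentials
  set E : ℝ := Real.exp (x*3) with hE
  set F : ℝ := Real.exp (x*(-1)) with hF
  have hFpos : 0 < F := Real.exp_pos _
  have hEF : F ≤ E := Real.exp_le_exp.mpr (by nlinarith)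
  have hE3F : 0 < E + 3*F := by positivity
  -- bound each configuration
  have hbound : ∀ i : Fin 4,
      (3*E*AA i - F*BB i)/(E*AA i + F*BB i)
        ≤ 3*(E-F)/(E+3*F) + 16*E*F*(3*AA i - BB i)/((E+3*F)^2*W) := by
    intro i
    have := tangent_bound E F (AA i) (BB i) hFpos hEF (hAnn i) (hBnn i)
      (by rw [hABW i]; exact hWpos)
    rwa [hABW i] at this
  have hsumBB : ∑ i : Fin 4, BB i = 3*W := by
    have hb' : ∀ i : Fin 4, BB i = W - AA i := fun i => by linarith [hABW i]
    rw [Finset.sum_congr rfl fun i _ => hb' i, Finset.sum_sub_distrib, hsumA,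
      Finset.sum_const, Finset.card_univ, Fintype.card_fin, nsmul_eq_mul]
    push_cast
    ring
  have hsum0 : ∑ i : Fin 4, (3*(E-F)/(E+3*F) + 16*E*F*(3*AA i - BB i)/((E+3*F)^2*W))
      = 12*((E-F)/(E+3*F)) := by
    rw [Finset.sum_add_distrib]
    have hc : ∑ _i : Fin 4, 3*(E-F)/(E+3*F) = 4*(3*(E-F)/(E+3*F)) := by
      rw [Finset.sum_const, Finset.card_univ, Fintype.card_fin, nsmul_eq_mul]
      push_cast
      ring
    have hd : ∑ i : Fin 4, 16*E*F*(3*AA i - BB i)/((E+3*F)^2*W) = 0 := by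
      have : ∀ i : Fin 4, 16*E*F*(3*AA i - BB i)/((E+3*F)^2*W)
          = (3*AA i - BB i) * (16*E*F/((E+3*F)^2*W)) := fun i => by
        rw [div_eq_mul_inv, div_eq_mul_inv]; ring
      rw [Finset.sum_congr rfl fun i _ => this i, ← Finset.sum_mul]
      have hz : ∑ i : Fin 4, (3*AA i - BB i) = 0 := by
        rw [Finset.sum_sub_distrib, ← Finset.mul_sum, hsumA, hsumBB]
        ring
      rw [hz, zero_mul]
    rw [hc, hd]
    ring
  have hs : ∑ i : Fin 4, (3*E*AA i - F*BB i)/(E*AA i + F*BB i)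
      ≤ 12*((E-F)/(E+3*F)) := by
    calc ∑ i : Fin 4, (3*E*AA i - F*BB i)/(E*AA i + F*BB i)
        ≤ ∑ i : Fin 4, (3*(E-F)/(E+3*F) + 16*E*F*(3*AA i - BB i)/((E+3*F)^2*W)) :=
          Finset.sum_le_sum fun i _ => hbound i
      _ = 12*((E-F)/(E+3*F)) := hsum0
  -- rewrite the goal
  have hgoal : ∑ i : Fin 4,
      (eA β (K i) {a, b} + eA β (K i) {b, c} + eA β (K i) {c, a})
      = -J0 * ∑ i : Fin 4, (3*E*AA i - F*BB i)/(E*AA i + F*BB i) := by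
    rw [Finset.mul_sum]
    refine Finset.sum_congr rfl fun i _ => ?_
    rw [hnum i, hZeq i]
    rw [div_eq_mul_inv, div_eq_mul_inv]
    ring
  rw [hgoal]
  -- rewrite the right-hand side
  have hEe : E = Real.exp (2*β*J0) * Real.exp x := by
    rw [hE, ← Real.exp_add]
    congr 1
    rw [hx]; ring
  have hFe : F = Real.exp (-(2*β*J0)) * Real.exp x := by
    rw [hF, ← Real.exp_add]
    congr 1
    rw [hx]; ring
  have hrhs : -3 * J0 * (Real.exp (2*β*J0) - Real.exp (-(2*β*J0))) /
        (Real.exp (2*β*J0) + 3 * Real.exp (-(2*β*J0)))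
      = -(3*J0) * ((E - F)/(E + 3*F)) := by
    rw [hEe, hFe]
    rw [show Real.exp (2*β*J0) * Real.exp x - Real.exp (-(2*β*J0)) * Real.exp x
        = (Real.exp (2*β*J0) - Real.exp (-(2*β*J0))) * Real.exp x from by ring,
      show Real.exp (2*β*J0) * Real.exp x + 3 * (Real.exp (-(2*β*J0)) * Real.exp x)
        = (Real.exp (2*β*J0) + 3 * Real.exp (-(2*β*J0))) * Real.exp x from by ring,
      mul_div_assoc, mul_div_mul_right _ _ (Real.exp_ne_zero x)]
    ring
  rw [hrhs]
  -- conclude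
  have hmul := mul_le_mul_of_nonneg_left hs hJ.le
  linarith [hmul]
end

section
/- In the same setting, letting configurations 5–8 be the four frustrated sign assignments of the triangle couplings (J_{12}J_{23}J_{31} = −J³ < 0), the average satisfies (1/4)∑_{i=5}^{8} e_TR(β,i) ≥ −3J·(e^{2βJ} − e^{−2βJ})/(3e^{2βJ} + e^{−2βJ}) for all β > 0. -/
open Finset Real

/-- The four frustrated sign assignments of the triangle couplings. -/
def signsF : Fin 4 → Fin 3 → ℝ :=
  ![![-1, -1, -1], ![-1, 1, 1], ![1, -1, 1], ![1, 1, -1]]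

private lemma amhm2' (u v : ℝ) (hu : 0 < u) (hv : 0 < v) : 4/(u+v) ≤ 1/u + 1/v := by
  rw [div_add_div _ _ hu.ne' hv.ne', div_le_div_iff₀ (by positivity) (by positivity)]
  nlinarith [sq_nonneg (u - v)]

private lemma amhm4' (y0 y1 y2 y3 : ℝ) (h0 : 0 < y0) (h1 : 0 < y1) (h2 : 0 < y2) (h3 : 0 < y3) :
    16/(y0+y1+y2+y3) ≤ 1/y0 + 1/y1 + 1/y2 + 1/y3 := by
  have a := amhm2' y0 y1 h0 h1
  have b := amhm2' y2 y3 h2 h3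
  have c := amhm2' (y0+y1) (y2+y3) (by positivity) (by positivity)
  have e1 : (16:ℝ)/(y0+y1+y2+y3) = 4*(4/((y0+y1)+(y2+y3))) := by
    rw [mul_div_assoc']; norm_num; ring_nf
  have e2 : (4:ℝ)/(y0+y1) = 4*(1/(y0+y1)) := by ring
  have e3 : (4:ℝ)/(y2+y3) = 4*(1/(y2+y3)) := by ring
  nlinarith [c]

set_option maxHeartbeats 1000000 in
private lemma core_ineq' (J0 A B x0 x1 x2 x3 : ℝ) (hJ : 0 < J0) (hA : 0 < A) (hAB : A < B)
    (h0 : 0 ≤ x0) (h1 : 0 ≤ x1) (h2 : 0 ≤ x2) (h3 : 0 ≤ x3)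
    (hP : 0 < x0 + x1 + x2 + x3) :
    (1/4) * ((3*J0*A*x0 - J0*B*(x1+x2+x3)) / (A*x0 + B*(x1+x2+x3))
           + (3*J0*A*x1 - J0*B*(x0+x2+x3)) / (A*x1 + B*(x0+x2+x3))
           + (3*J0*A*x2 - J0*B*(x0+x1+x3)) / (A*x2 + B*(x0+x1+x3))
           + (3*J0*A*x3 - J0*B*(x0+x1+x2)) / (A*x3 + B*(x0+x1+x2)))
      ≥ -3*J0*(B-A)/(3*B+A) := by
  have hB : 0 < B := hA.trans hAB
  have hBA : 0 < B - A := sub_pos.mpr hAB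
  have hy0 : 0 < A*x0 + B*(x1+x2+x3) := by nlinarith
  have hy1 : 0 < A*x1 + B*(x0+x2+x3) := by nlinarith
  have hy2 : 0 < A*x2 + B*(x0+x1+x3) := by nlinarith
  have hy3 : 0 < A*x3 + B*(x0+x1+x2) := by nlinarith
  have hH := amhm4' _ _ _ _ hy0 hy1 hy2 hy3
  have hsumy : (A*x0 + B*(x1+x2+x3)) + (A*x1 + B*(x0+x2+x3)) + (A*x2 + B*(x0+x1+x3))
      + (A*x3 + B*(x0+x1+x2)) = (3*B+A)*(x0+x1+x2+x3) := by ring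
  rw [hsumy] at hH
  have hH2 : 16 ≤ (1/(A*x0 + B*(x1+x2+x3)) + 1/(A*x1 + B*(x0+x2+x3))
      + 1/(A*x2 + B*(x0+x1+x3)) + 1/(A*x3 + B*(x0+x1+x2))) * ((3*B+A)*(x0+x1+x2+x3)) :=
    (div_le_iff₀ (by positivity)).mp hH
  have t0 : x0/(A*x0 + B*(x1+x2+x3))
      = (B*(x0+x1+x2+x3)*(1/(A*x0 + B*(x1+x2+x3))) - 1)/(B-A) := by
      rw [eq_div_iff hBA.ne', div_mul_eq_mul_div, mul_one_div, div_sub_one hy0.ne',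
        div_left_inj' hy0.ne']; ring
  have t1 : x1/(A*x1 + B*(x0+x2+x3))
      = (B*(x0+x1+x2+x3)*(1/(A*x1 + B*(x0+x2+x3))) - 1)/(B-A) := by
      rw [eq_div_iff hBA.ne', div_mul_eq_mul_div, mul_one_div, div_sub_one hy1.ne',
        div_left_inj' hy1.ne']; ring
  have t2 : x2/(A*x2 + B*(x0+x1+x3))
      = (B*(x0+x1+x2+x3)*(1/(A*x2 + B*(x0+x1+x3))) - 1)/(B-A) := by
      rw [eq_div_iff hBA.ne', div_mul_eq_mul_div, mul_one_div, div_sub_one hy2.ne',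
        div_left_inj' hy2.ne']; ring
  have t3 : x3/(A*x3 + B*(x0+x1+x2))
      = (B*(x0+x1+x2+x3)*(1/(A*x3 + B*(x0+x1+x2))) - 1)/(B-A) := by
      rw [eq_div_iff hBA.ne', div_mul_eq_mul_div, mul_one_div, div_sub_one hy3.ne',
        div_left_inj' hy3.ne']; ring
  have hkey : x0/(A*x0 + B*(x1+x2+x3)) + x1/(A*x1 + B*(x0+x2+x3))
      + x2/(A*x2 + B*(x0+x1+x3)) + x3/(A*x3 + B*(x0+x1+x2))
      = (B*(x0+x1+x2+x3)*(1/(A*x0 + B*(x1+x2+x3)) + 1/(A*x1 + B*(x0+x2+x3))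
      + 1/(A*x2 + B*(x0+x1+x3)) + 1/(A*x3 + B*(x0+x1+x2))) - 4)/(B-A) := by
    rw [t0, t1, t2, t3]; ring
  have hsum_s : 4/(3*B+A) ≤ x0/(A*x0 + B*(x1+x2+x3)) + x1/(A*x1 + B*(x0+x2+x3))
      + x2/(A*x2 + B*(x0+x1+x3)) + x3/(A*x3 + B*(x0+x1+x2)) := by
    rw [hkey, div_le_div_iff₀ (by positivity) hBA]
    nlinarith [mul_le_mul_of_nonneg_left hH2 hB.le]
  have e0 : (3*J0*A*x0 - J0*B*(x1+x2+x3)) / (A*x0 + B*(x1+x2+x3))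
      = -J0 + 4*A*J0*(x0/(A*x0 + B*(x1+x2+x3))) := by field_simp; ring
  have e1 : (3*J0*A*x1 - J0*B*(x0+x2+x3)) / (A*x1 + B*(x0+x2+x3))
      = -J0 + 4*A*J0*(x1/(A*x1 + B*(x0+x2+x3))) := by field_simp; ring
  have e2 : (3*J0*A*x2 - J0*B*(x0+x1+x3)) / (A*x2 + B*(x0+x1+x3))
      = -J0 + 4*A*J0*(x2/(A*x2 + B*(x0+x1+x3))) := by field_simp; ring
  have e3 : (3*J0*A*x3 - J0*B*(x0+x1+x2)) / (A*x3 + B*(x0+x1+x2))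
      = -J0 + 4*A*J0*(x3/(A*x3 + B*(x0+x1+x2))) := by field_simp; ring
  rw [e0, e1, e2, e3]
  have hrhs : -3*J0*(B-A)/(3*B+A) = -J0 + A*J0*(4/(3*B+A)) := by
    field_simp; ring
  rw [ge_iff_le, hrhs]
  have := mul_le_mul_of_nonneg_left hsum_s (by positivity : (0:ℝ) ≤ A*J0)
  linarith

/-- average of the triangle energy over the four frustrated
bond configurations is bounded below by the isolated frustrated triangle
energy. -/
theorem frustrated_average_bound {V : Type*} [Fintype V] [DecidableEq V]
    (β J0 : ℝ) (hβ : 0 < β) (hJ : 0 < J0) (a b c : V)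
    (hab : a ≠ b) (hbc : b ≠ c) (hca : c ≠ a)
    (K : Fin 4 → Finset V → ℝ)
    (hKab : ∀ i, K i {a, b} = signsF i 0 * J0)
    (hKbc : ∀ i, K i {b, c} = signsF i 1 * J0)
    (hKca : ∀ i, K i {c, a} = signsF i 2 * J0)
    (hoff : ∀ i j, ∀ B : Finset V,
      B ≠ {a, b} → B ≠ {b, c} → B ≠ {c, a} → K i B = K j B) :
    (1 / 4) * ∑ i : Fin 4,
        (eA β (K i) {a, b} + eA β (K i) {b, c} + eA β (K i) {c, a}) ≥
      -3 * J0 * (Real.exp (2 * β * J0) - Real.exp (-(2 * β * J0))) /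
        (3 * Real.exp (2 * β * J0) + Real.exp (-(2 * β * J0))) := by
  classical
  have hA12 : ({a,b} : Finset V) ≠ {b,c} := by
    intro h
    have ha : a ∈ ({b,c} : Finset V) := by rw [← h]; simp
    simp only [Finset.mem_insert, Finset.mem_singleton] at ha
    rcases ha with h'|h'
    · exact hab h'
    · exact hca h'.symm
  have hA13 : ({a,b} : Finset V) ≠ {c,a} := by
    intro h
    have hb : b ∈ ({c,a} : Finset V) := by rw [← h]; simp
    simp only [Finset.mem_insert, Finset.mem_singleton] at hb
    rcases hb with h'|h'
    · exact hbc h'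
    · exact hab h'.symm
  have hA23 : ({b,c} : Finset V) ≠ {c,a} := by
    intro h
    have hb : b ∈ ({c,a} : Finset V) := by rw [← h]; simp
    simp only [Finset.mem_insert, Finset.mem_singleton] at hb
    rcases hb with h'|h'
    · exact hbc h'
    · exact hab h'.symm
  have hsub : ∀ (i' : Fin 4) (S : V → Bool), energy (K i') S
      = -(K i' {a,b} * (spin (S a) * spin (S b))
          + K i' {b,c} * (spin (S b) * spin (S c))
          + K i' {c,a} * (spin (S c) * spin (S a))
          + ∑ B ∈ (Finset.univ \ {{a,b},{b,c},{c,a}} : Finset (Finset V)),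
              K i' B * ∏ x ∈ B, spin (S x)) := by
    intro i' S
    simp only [energy]
    congr 1
    rw [← Finset.sum_sdiff (Finset.subset_univ ({{a,b},{b,c},{c,a}} : Finset (Finset V)))]
    rw [Finset.sum_insert (by simp [hA12, hA13]), Finset.sum_insert (by simp [hA23]),
      Finset.sum_singleton]
    rw [Finset.prod_pair hab, Finset.prod_pair hbc, Finset.prod_pair hca]
    ring
  let D : Fin 4 → (V → Bool) → ℝ := fun i S =>
    signsF i 0 * (spin (S a) * spin (S b)) + signsF i 1 * (spin (S b) * spin (S c))
      + signsF i 2 * (spin (S c) * spin (S a))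
  have hdiff : ∀ (i : Fin 4) (S : V → Bool),
      energy (K i) S + J0 * D i S = energy (K 0) S + J0 * D 0 S := by
    intro i S
    have hoffs : ∑ B ∈ (Finset.univ \ {{a,b},{b,c},{c,a}} : Finset (Finset V)),
        K i B * ∏ x ∈ B, spin (S x)
        = ∑ B ∈ (Finset.univ \ {{a,b},{b,c},{c,a}} : Finset (Finset V)),
        K 0 B * ∏ x ∈ B, spin (S x) := by
      refine Finset.sum_congr rfl fun B hB => ?_
      simp only [Finset.mem_sdiff, Finset.mem_insert, Finset.mem_singleton, Finset.mem_univ,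
        true_and, not_or] at hB
      rw [hoff i 0 B hB.1 hB.2.1 hB.2.2]
    rw [hsub i S, hsub 0 S, hoffs, hKab i, hKbc i, hKca i, hKab 0, hKbc 0, hKca 0]
    simp only [D]
    ring
  let C : (V → Bool) → ℝ := fun S => energy (K 0) S + J0 * D 0 S
  let W : (V → Bool) → ℝ := fun S => Real.exp (-β * C S)
  have hexp : ∀ (i : Fin 4) (S : V → Bool),
      Real.exp (-β * energy (K i) S) = Real.exp (β * (J0 * D i S)) * W S := by
    intro i S
    rw [← Real.exp_add]
    congr 1
    have h := hdiff i S
    simp only [W, C]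
    linear_combination (-β) * h
  let g : (V → Bool) → Bool × Bool := fun S => (S a == S b, S b == S c)
  let d : Fin 4 → Bool × Bool → ℝ := fun i bb =>
    signsF i 0 * spin bb.1 + signsF i 1 * spin bb.2 + signsF i 2 * (spin bb.1 * spin bb.2)
  have hDval : ∀ (i : Fin 4) (S : V → Bool), D i S = d i (g S) := by
    intro i S
    simp only [D, d, g]
    cases hx : S a <;> cases hy : S b <;> cases hz : S c <;> simp [spin]
  let p : Bool × Bool → ℝ := fun bb => ∑ S ∈ Finset.univ.filter (fun S => g S = bb), W S
  have fiber : ∀ F : Bool × Bool → ℝ,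
      (∑ S : V → Bool, F (g S) * W S) = ∑ bb : Bool × Bool, F bb * p bb := by
    intro F
    rw [← Finset.sum_fiberwise_of_maps_to (fun S _ => Finset.mem_univ (g S))
        (fun S => F (g S) * W S)]
    refine Finset.sum_congr rfl fun bb _ => ?_
    simp only [p, Finset.mul_sum]
    refine Finset.sum_congr rfl fun S hS => ?_
    rw [(Finset.mem_filter.mp hS).2]
  have hp : ∀ bb, 0 ≤ p bb := fun bb => Finset.sum_nonneg fun S _ => (Real.exp_pos _).le
  have hPpos : 0 < ∑ S : V → Bool, W S :=
    Finset.sum_pos (fun S _ => Real.exp_pos _) ⟨fun _ => true, Finset.mem_univ _⟩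
  have hptot : p (true,true) + p (true,false) + p (false,true) + p (false,false)
      = ∑ S : V → Bool, W S := by
    have h1 := fiber (fun _ => 1)
    simp only [one_mul, Fintype.sum_prod_type, Fintype.sum_bool] at h1
    linarith
  have hZ : ∀ i, Z β (K i) = ∑ bb : Bool × Bool, Real.exp (β * (J0 * d i bb)) * p bb := by
    intro i
    simp only [Z]
    rw [← fiber (fun bb => Real.exp (β * (J0 * d i bb)))]
    exact Finset.sum_congr rfl fun S _ => by rw [hexp i S, hDval i S]
  have hNum : ∀ i, eA β (K i) {a,b} + eA β (K i) {b,c} + eA β (K i) {c,a}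
      = (∑ bb : Bool × Bool, (-(J0 * d i bb)) * Real.exp (β * (J0 * d i bb)) * p bb)
        / Z β (K i) := by
    intro i
    simp only [eA, texp]
    rw [← add_div, ← add_div]
    congr 1
    rw [← Finset.sum_add_distrib, ← Finset.sum_add_distrib]
    rw [← fiber (fun bb => (-(J0 * d i bb)) * Real.exp (β * (J0 * d i bb)))]
    refine Finset.sum_congr rfl fun S _ => ?_
    rw [Finset.prod_pair hab, Finset.prod_pair hbc, Finset.prod_pair hca, hexp i S,
      hKab i, hKbc i, hKca i, hDval i S]
    have hu := hDval i S
    simp only [D] at hu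
    linear_combination (-(J0) * (Real.exp (β * (J0 * d i (g S))) * W S)) * hu
  have d00 : d 0 (true,true) = (-3 : ℝ) := by
    norm_num [d, signsF, spin, Matrix.cons_val_zero, Matrix.cons_val_one, Matrix.cons_val_two,
      Matrix.head_cons, Matrix.vecHead, Matrix.vecTail]
  have d01 : d 0 (true,false) = (1 : ℝ) := by
    norm_num [d, signsF, spin, Matrix.cons_val_zero, Matrix.cons_val_one, Matrix.cons_val_two,
      Matrix.head_cons, Matrix.vecHead, Matrix.vecTail]
  have d02 : d 0 (false,true) = (1 : ℝ) := by
    norm_num [d, signsF, spin, Matrix.cons_val_zero, Matrix.cons_val_one, Matrix.cons_val_two,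
      Matrix.head_cons, Matrix.vecHead, Matrix.vecTail]
  have d03 : d 0 (false,false) = (1 : ℝ) := by
    norm_num [d, signsF, spin, Matrix.cons_val_zero, Matrix.cons_val_one, Matrix.cons_val_two,
      Matrix.head_cons, Matrix.vecHead, Matrix.vecTail]
  have d10 : d 1 (true,true) = (1 : ℝ) := by
    norm_num [d, signsF, spin, Matrix.cons_val_zero, Matrix.cons_val_one, Matrix.cons_val_two,
      Matrix.head_cons, Matrix.vecHead, Matrix.vecTail]
  have d11 : d 1 (true,false) = (-3 : ℝ) := by
    norm_num [d, signsF, spin, Matrix.cons_val_zero, Matrix.cons_val_one, Matrix.cons_val_two,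
      Matrix.head_cons, Matrix.vecHead, Matrix.vecTail]
  have d12 : d 1 (false,true) = (1 : ℝ) := by
    norm_num [d, signsF, spin, Matrix.cons_val_zero, Matrix.cons_val_one, Matrix.cons_val_two,
      Matrix.head_cons, Matrix.vecHead, Matrix.vecTail]
  have d13 : d 1 (false,false) = (1 : ℝ) := by
    norm_num [d, signsF, spin, Matrix.cons_val_zero, Matrix.cons_val_one, Matrix.cons_val_two,
      Matrix.head_cons, Matrix.vecHead, Matrix.vecTail]
  have d20 : d 2 (true,true) = (1 : ℝ) := by
    norm_num [d, signsF, spin, Matrix.cons_val_zero, Matrix.cons_val_one, Matrix.cons_val_two,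
      Matrix.head_cons, Matrix.vecHead, Matrix.vecTail]
  have d21 : d 2 (true,false) = (1 : ℝ) := by
    norm_num [d, signsF, spin, Matrix.cons_val_zero, Matrix.cons_val_one, Matrix.cons_val_two,
      Matrix.head_cons, Matrix.vecHead, Matrix.vecTail]
  have d22 : d 2 (false,true) = (-3 : ℝ) := by
    norm_num [d, signsF, spin, Matrix.cons_val_zero, Matrix.cons_val_one, Matrix.cons_val_two,
      Matrix.head_cons, Matrix.vecHead, Matrix.vecTail]
  have d23 : d 2 (false,false) = (1 : ℝ) := by
    norm_num [d, signsF, spin, Matrix.cons_val_zero, Matrix.cons_val_one, Matrix.cons_val_two,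
      Matrix.head_cons, Matrix.vecHead, Matrix.vecTail]
  have d30 : d 3 (true,true) = (1 : ℝ) := by
    simp [d, signsF, spin]
  have d31 : d 3 (true,false) = (1 : ℝ) := by
    simp [d, signsF, spin]
  have d32 : d 3 (false,true) = (1 : ℝ) := by
    simp [d, signsF, spin]
  have d33 : d 3 (false,false) = (-3 : ℝ) := by
    simp [d, signsF, spin]; norm_num
  rw [ge_iff_le, Fin.sum_univ_four, hNum 0, hNum 1, hNum 2, hNum 3, hZ 0, hZ 1, hZ 2, hZ 3]
  simp only [Fintype.sum_prod_type, Fintype.sum_bool]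
  rw [d00, d01, d02, d03, d10, d11, d12, d13, d20, d21, d22, d23, d30, d31, d32, d33]
  have hEA : (0:ℝ) < Real.exp (β * (J0 * (-3 : ℝ))) := Real.exp_pos _
  have hEB : (0:ℝ) < Real.exp (β * (J0 * (1 : ℝ))) := Real.exp_pos _
  have hABlt : Real.exp (β * (J0 * (-3 : ℝ))) < Real.exp (β * (J0 * (1 : ℝ))) := by
    apply Real.exp_lt_exp.mpr; nlinarith
  have hcore := core_ineq' J0 (Real.exp (β * (J0 * (-3 : ℝ)))) (Real.exp (β * (J0 * (1 : ℝ))))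
    (p (true,true)) (p (true,false)) (p (false,true)) (p (false,false))
    hJ hEA hABlt (hp _) (hp _) (hp _) (hp _) (by rw [hptot]; exact hPpos)
  have hrhseq : -3 * J0 * (Real.exp (2 * β * J0) - Real.exp (-(2 * β * J0))) /
        (3 * Real.exp (2 * β * J0) + Real.exp (-(2 * β * J0)))
      = -3*J0*(Real.exp (β * (J0 * (1 : ℝ))) - Real.exp (β * (J0 * (-3 : ℝ))))
        / (3*Real.exp (β * (J0 * (1 : ℝ))) + Real.exp (β * (J0 * (-3 : ℝ)))) := by
    have h2 : Real.exp (2 * β * J0)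
        = Real.exp (β * (J0 * (1 : ℝ))) * Real.exp (β * (J0 * (1 : ℝ))) := by
      rw [← Real.exp_add]; congr 1; ring
    have hm : Real.exp (-(2 * β * J0))
        = Real.exp (β * (J0 * (1 : ℝ))) * Real.exp (β * (J0 * (-3 : ℝ))) := by
      rw [← Real.exp_add]; congr 1; ring
    rw [h2, hm, div_eq_div_iff (by positivity) (by positivity)]
    ring
  rw [hrhseq]
  refine le_trans hcore (le_of_eq ?_)
  ring
end

section
/- In the ±J Ising spin glass on the Nishimori line (β = β_N with exp(2β_N J) = p/(1−p)), the sign identity specializes to −E[sgn_A(β_N)] = E[(sinh(2β_N J_A)/(2J_A))·|Δ(β_N,J_A)|], and consequently E[sgn_A(β_N)] ≤ 0; i.e., on the Nishimori line the thermal average of the local energy is at least as likely to be below −J_A tanh(β_N J_A) as above it. -/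
open Finset Real

/-- Probability of the sign configuration `σ` for i.i.d. `±J` couplings with
`P(+J) = p`, `P(-J) = 1 - p`. -/
noncomputable def prob {V : Type*} [Fintype V] [DecidableEq V]
    (p : ℝ) (σ : Finset V → Bool) : ℝ :=
  ∏ B : Finset V, if σ B then p else 1 - p

/-- The `±J` coupling configuration determined by the signs `σ`. -/
noncomputable def Jc {V : Type*} (J0 : ℝ) (σ : Finset V → Bool) :
    Finset V → ℝ :=
  fun B => spin (σ B) * J0

-- ===== auxiliary =====

lemma spin_one_or (b : Bool) : spin b = 1 ∨ spin b = -1 := by cases b <;> simp [spin]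

lemma spin_beq (a b : Bool) : spin (a == b) = spin a * spin b := by
  cases a <;> cases b <;> norm_num [spin]

lemma prod_spin_one_or {V : Type*} (S : V → Bool) (A : Finset V) :
    (∏ i ∈ A, spin (S i)) = 1 ∨ (∏ i ∈ A, spin (S i)) = -1 := by
  refine Finset.prod_induction _ (fun x => x = 1 ∨ x = -1) ?_ (Or.inl rfl) ?_
  · rintro a b (ha | ha) (hb | hb) <;> rw [ha, hb] <;> norm_num
  · intro i _; exact spin_one_or _

noncomputable def parity {V : Type*} (τ : V → Bool) (B : Finset V) : Bool :=
  decide ((∏ i ∈ B, spin (τ i)) = 1)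

lemma spin_parity {V : Type*} (τ : V → Bool) (B : Finset V) :
    spin (parity τ B) = ∏ i ∈ B, spin (τ i) := by
  rcases prod_spin_one_or τ B with h | h
  · rw [parity, decide_eq_true h, h]; simp [spin]
  · rw [parity, decide_eq_false (by rw [h]; norm_num), h]; simp [spin]

noncomputable def NA {V : Type*} [Fintype V] [DecidableEq V]
    (β : ℝ) (J : Finset V → ℝ) (A : Finset V) : ℝ :=
  ∑ S : V → Bool, (∏ i ∈ A, spin (S i)) * Real.exp (-β * energy J S)

lemma eA_mul_Z {V : Type*} [Fintype V] [DecidableEq V] (β : ℝ) (J : Finset V → ℝ)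
    (A : Finset V) : eA β J A * Z β J = -(J A) * NA β J A := by
  have hZ : Z β J ≠ 0 := (Z_pos β J).ne'
  rw [eA, texp, div_mul_cancel₀ _ hZ, NA, Finset.mul_sum]
  exact Finset.sum_congr rfl fun S _ => by ring

lemma flipJ_A {V : Type*} [DecidableEq V] (J : Finset V → ℝ) (A : Finset V) :
    flipJ J A A = -(J A) := Function.update_self _ _ _

lemma energy_flip {V : Type*} [Fintype V] [DecidableEq V] (J : Finset V → ℝ)
    (A : Finset V) (S : V → Bool) :
    energy (flipJ J A) S = energy J S + 2 * J A * ∏ i ∈ A, spin (S i) := by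
  have h1 : ∀ (K : Finset V → ℝ), energy K S
      = -(K A * ∏ i ∈ A, spin (S i)
          + ∑ B ∈ Finset.univ.erase A, K B * ∏ i ∈ B, spin (S i)) := by
    intro K
    rw [energy, ← Finset.add_sum_erase _ _ (Finset.mem_univ A)]
  rw [h1, h1]
  have h2 : ∑ B ∈ Finset.univ.erase A, flipJ J A B * ∏ i ∈ B, spin (S i)
      = ∑ B ∈ Finset.univ.erase A, J B * ∏ i ∈ B, spin (S i) := by
    refine Finset.sum_congr rfl fun B hB => ?_
    rw [flipJ, Function.update_of_ne (Finset.ne_of_mem_erase hB)]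
  rw [h2, flipJ_A]; ring

lemma exp_flip {V : Type*} [Fintype V] [DecidableEq V] (β : ℝ) (J : Finset V → ℝ)
    (A : Finset V) (S : V → Bool) :
    Real.exp (-β * energy (flipJ J A) S)
      = Real.exp (-β * energy J S) *
        (Real.cosh (2 * β * J A) - Real.sinh (2 * β * J A) * ∏ i ∈ A, spin (S i)) := by
  rw [energy_flip]
  rcases prod_spin_one_or S A with h | h <;> rw [h]
  · rw [mul_one, mul_one,
      show -β * (energy J S + 2 * J A) = -β * energy J S + -(2 * β * J A) by ring,
      Real.exp_add, Real.cosh_sub_sinh]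
  · rw [show -β * (energy J S + 2 * J A * (-1)) = -β * energy J S + (2 * β * J A) by ring,
      Real.exp_add]
    have h2 := Real.cosh_add_sinh (2 * β * J A)
    linear_combination Real.exp (-β * energy J S) * h2.symm

lemma Z_flip {V : Type*} [Fintype V] [DecidableEq V] (β : ℝ) (J : Finset V → ℝ)
    (A : Finset V) :
    Z β (flipJ J A) = Real.cosh (2 * β * J A) * Z β J
      - Real.sinh (2 * β * J A) * NA β J A := by
  rw [Z, Z, NA, Finset.mul_sum, Finset.mul_sum, ← Finset.sum_sub_distrib]
  refine Finset.sum_congr rfl fun S _ => ?_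
  rw [exp_flip]; ring

lemma NA_flip {V : Type*} [Fintype V] [DecidableEq V] (β : ℝ) (J : Finset V → ℝ)
    (A : Finset V) :
    NA β (flipJ J A) A = Real.cosh (2 * β * J A) * NA β J A
      - Real.sinh (2 * β * J A) * Z β J := by
  rw [NA, NA, Z, Finset.mul_sum, Finset.mul_sum, ← Finset.sum_sub_distrib]
  refine Finset.sum_congr rfl fun S _ => ?_
  rw [exp_flip]
  rcases prod_spin_one_or S A with h | h <;> rw [h] <;> ring

lemma trig1 (β J : ℝ) :
    Real.cosh (2 * β * J) - Real.tanh (β * J) * Real.sinh (2 * β * J) = 1 := by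
  have h := Real.cosh_sq_sub_sinh_sq (β * J)
  have hc := Real.cosh_pos (β * J)
  rw [show 2 * β * J = 2 * (β * J) by ring, Real.tanh_eq_sinh_div_cosh,
    Real.sinh_two_mul, Real.cosh_two_mul]
  field_simp
  nlinarith [h]

lemma trig2 (β J : ℝ) :
    Real.tanh (β * J) * Real.cosh (2 * β * J) - Real.sinh (2 * β * J)
      = -Real.tanh (β * J) := by
  have h := Real.cosh_sq_sub_sinh_sq (β * J)
  have hc := Real.cosh_pos (β * J)
  rw [show 2 * β * J = 2 * (β * J) by ring, Real.tanh_eq_sinh_div_cosh,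
    Real.sinh_two_mul, Real.cosh_two_mul]
  field_simp
  linear_combination (-Real.sinh (β * J)) * h

lemma Δ_mul_Z {V : Type*} [Fintype V] [DecidableEq V] (β : ℝ) (J : Finset V → ℝ)
    (A : Finset V) :
    Δ β J A * Z β J = J A * (Real.tanh (β * J A) * Z β J - NA β J A) := by
  rw [Δ, add_mul, eA_mul_Z]; ring

lemma flip_a {V : Type*} [Fintype V] [DecidableEq V] (β : ℝ) (J : Finset V → ℝ)
    (A : Finset V) :
    Δ β (flipJ J A) A * Z β (flipJ J A) = -(Δ β J A * Z β J) := by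
  rw [Δ_mul_Z, Δ_mul_Z, flipJ_A, Z_flip, NA_flip,
    show β * -(J A) = -(β * J A) by ring, Real.tanh_neg]
  have h1 := trig1 β (J A)
  have h2 := trig2 β (J A)
  linear_combination (J A * NA β J A) * h1 + (J A * Z β J) * h2

lemma flip_b {V : Type*} [Fintype V] [DecidableEq V] (β : ℝ) (J : Finset V → ℝ)
    (A : Finset V) :
    J A * (Z β J - Z β (flipJ J A))
      = -(Real.sinh (2 * β * J A) * (Δ β J A * Z β J)) := by
  rw [Z_flip, Δ_mul_Z]
  have h1 := trig1 β (J A)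
  linear_combination (-(J A * Z β J)) * h1


-- ===== pair lemma =====

lemma pair_zero {V : Type*} [Fintype V] [DecidableEq V] (β : ℝ) (J : Finset V → ℝ)
    (A : Finset V) (hJA : J A ≠ 0) (hD : Δ β J A ≠ 0) (hD' : Δ β (flipJ J A) A ≠ 0) :
    (Δ β J A / |Δ β J A|
        + Real.sinh (2 * β * J A) / (2 * J A) * |Δ β J A|) * Z β J
      + (Δ β (flipJ J A) A / |Δ β (flipJ J A) A|
        + Real.sinh (2 * β * flipJ J A A) / (2 * flipJ J A A) * |Δ β (flipJ J A) A|)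
          * Z β (flipJ J A) = 0 := by
  have hZ1 : 0 < Z β J := Z_pos β J
  have hZ2 : 0 < Z β (flipJ J A) := Z_pos β (flipJ J A)
  have ha : Δ β (flipJ J A) A * Z β (flipJ J A) = -(Δ β J A * Z β J) := flip_a β J A
  have hb : J A * (Z β J - Z β (flipJ J A))
      = -(Real.sinh (2 * β * J A) * (Δ β J A * Z β J)) := flip_b β J A
  rw [flipJ_A,
    show 2 * β * -(J A) = -(2 * β * J A) by ring, Real.sinh_neg,
    show (2 : ℝ) * -(J A) = -(2 * J A) by ring, neg_div_neg_eq]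
  set D := Δ β J A with hDdef
  set D' := Δ β (flipJ J A) A with hD'def
  set Z1 := Z β J
  set Z2 := Z β (flipJ J A)
  set s := Real.sinh (2 * β * J A)
  set u := s / (2 * J A) with hu_def
  have hu : 2 * J A * u = s := by
    rw [hu_def]; field_simp
  have hDD' : D' = -(D * Z1) / Z2 := by
    rw [eq_div_iff hZ2.ne']; exact ha
  have hb2 : Z1 - Z2 = -(2 * u * (D * Z1)) :=
    mul_left_cancel₀ hJA (by rw [hb, ← hu]; ring)
  rcases lt_or_gt_of_ne hD with hDneg | hDpos
  · have hD'pos : 0 < D' := by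
      rw [hDD']
      apply div_pos _ hZ2
      nlinarith
    rw [abs_of_neg hDneg, abs_of_pos hD'pos, div_self hD'pos.ne', div_neg,
      div_self hD]
    linear_combination u * ha - hb2
  · have hD'neg : D' < 0 := by
      rw [hDD']
      apply div_neg_of_neg_of_pos _ hZ2
      nlinarith
    rw [abs_of_pos hDpos, abs_of_neg hD'neg, div_self hDpos.ne', div_neg,
      div_self hD'neg.ne]
    linear_combination (-u) * ha + hb2

-- ===== the flip as an involution on sign configurations =====

lemma Jc_update {V : Type*} [DecidableEq V] (J0 : ℝ) (σ : Finset V → Bool)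
    (A : Finset V) :
    Jc J0 (Function.update σ A (!σ A)) = flipJ (Jc J0 σ) A := by
  funext B
  by_cases h : B = A
  · subst h
    rw [flipJ, Function.update_self]
    show spin (Function.update σ B (!σ B) B) * J0 = -(spin (σ B) * J0)
    rw [Function.update_self]
    cases σ B <;> simp [spin] <;> ring
  · rw [flipJ, Function.update_of_ne h]
    show spin (Function.update σ A (!σ A) B) * J0 = spin (σ B) * J0
    rw [Function.update_of_ne h]

lemma Jc_ne_zero {V : Type*} {J0 : ℝ} (hJ0 : J0 ≠ 0) (σ : Finset V → Bool)
    (B : Finset V) : Jc J0 σ B ≠ 0 := by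
  show spin (σ B) * J0 ≠ 0
  rcases spin_one_or (σ B) with h | h <;> rw [h] <;> simpa using hJ0

-- ===== key Z-weighted sum is zero =====

lemma key_sum {V : Type*} [Fintype V] [DecidableEq V] (β J0 : ℝ) (A : Finset V)
    (hJ0 : J0 ≠ 0) (hnz : ∀ σ : Finset V → Bool, Δ β (Jc J0 σ) A ≠ 0) :
    ∑ σ : Finset V → Bool,
      (Δ β (Jc J0 σ) A / |Δ β (Jc J0 σ) A|
        + Real.sinh (2 * β * Jc J0 σ A) / (2 * Jc J0 σ A) * |Δ β (Jc J0 σ) A|)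
        * Z β (Jc J0 σ) = 0 := by
  set F : (Finset V → Bool) → ℝ := fun σ =>
    (Δ β (Jc J0 σ) A / |Δ β (Jc J0 σ) A|
      + Real.sinh (2 * β * Jc J0 σ A) / (2 * Jc J0 σ A) * |Δ β (Jc J0 σ) A|)
      * Z β (Jc J0 σ) with hF
  have hinv : Function.Involutive
      (fun σ : Finset V → Bool => Function.update σ A (!σ A)) := by
    intro σ; funext B
    by_cases h : B = A
    · subst h; simp [Function.update_self]
    · simp [Function.update_of_ne h]
  have hpair : ∀ σ : Finset V → Bool, F σ + F (Function.update σ A (!σ A)) = 0 := by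
    intro σ
    have h1 := pair_zero β (Jc J0 σ) A (Jc_ne_zero hJ0 σ A) (hnz σ)
      (by rw [← Jc_update]; exact hnz _)
    rw [hF]
    simp only []
    rw [Jc_update]
    exact h1
  have hsum : ∑ σ : Finset V → Bool, F (Function.update σ A (!σ A))
      = ∑ σ : Finset V → Bool, F σ :=
    Equiv.sum_comp (Function.Involutive.toPerm _ hinv) F
  have h0 : ∑ σ : Finset V → Bool, (F σ + F (Function.update σ A (!σ A))) = 0 :=
    Finset.sum_eq_zero fun σ _ => hpair σ
  rw [Finset.sum_add_distrib, hsum] at h0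
  linarith

-- ===== gaugeT transformation =====

noncomputable def gaugeT {V : Type*} (τ : V → Bool) (σ : Finset V → Bool) :
    Finset V → Bool :=
  fun B => σ B == parity τ B

lemma prod_spin_beq {V : Type*} (S τ : V → Bool) (B : Finset V) :
    (∏ i ∈ B, spin (S i == τ i))
      = (∏ i ∈ B, spin (S i)) * ∏ i ∈ B, spin (τ i) := by
  rw [← Finset.prod_mul_distrib]
  exact Finset.prod_congr rfl fun i _ => spin_beq _ _

lemma Jc_gaugeT_mul {V : Type*} (J0 : ℝ) (τ : V → Bool) (σ : Finset V → Bool)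
    (B : Finset V) (S : V → Bool) :
    Jc J0 (gaugeT τ σ) B * ∏ i ∈ B, spin (S i)
      = Jc J0 σ B * ∏ i ∈ B, spin (S i == τ i) := by
  show spin (σ B == parity τ B) * J0 * _ = spin (σ B) * J0 * _
  rw [spin_beq, spin_parity, prod_spin_beq]
  ring

lemma energy_gaugeT {V : Type*} [Fintype V] [DecidableEq V] (J0 : ℝ)
    (τ : V → Bool) (σ : Finset V → Bool) (S : V → Bool) :
    energy (Jc J0 (gaugeT τ σ)) S = energy (Jc J0 σ) (fun i => S i == τ i) := by
  rw [energy, energy]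
  congr 1
  exact Finset.sum_congr rfl fun B _ => Jc_gaugeT_mul J0 τ σ B S

lemma sum_comp_beq {V : Type*} [Fintype V] [DecidableEq V] (τ : V → Bool)
    (f : (V → Bool) → ℝ) :
    ∑ S : V → Bool, f (fun i => S i == τ i) = ∑ S : V → Bool, f S := by
  have hinv : Function.Involutive
      (fun (S : V → Bool) => (fun i => S i == τ i)) := by
    intro S; funext i
    show ((S i == τ i) == τ i) = S i
    cases S i <;> cases τ i <;> rfl
  exact Equiv.sum_comp (Function.Involutive.toPerm _ hinv) f

lemma Z_gaugeT {V : Type*} [Fintype V] [DecidableEq V] (β J0 : ℝ)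
    (τ : V → Bool) (σ : Finset V → Bool) :
    Z β (Jc J0 (gaugeT τ σ)) = Z β (Jc J0 σ) := by
  rw [Z, Z]
  rw [show (∑ S : V → Bool, Real.exp (-β * energy (Jc J0 (gaugeT τ σ)) S))
      = ∑ S : V → Bool, Real.exp (-β * energy (Jc J0 σ) (fun i => S i == τ i)) from
    Finset.sum_congr rfl fun S _ => by rw [energy_gaugeT]]
  exact sum_comp_beq τ (fun S => Real.exp (-β * energy (Jc J0 σ) S))

lemma eA_gaugeT {V : Type*} [Fintype V] [DecidableEq V] (β J0 : ℝ)
    (τ : V → Bool) (σ : Finset V → Bool) (A : Finset V) :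
    eA β (Jc J0 (gaugeT τ σ)) A = eA β (Jc J0 σ) A := by
  rw [eA, eA, texp, texp, Z_gaugeT]
  congr 1
  rw [show (∑ S : V → Bool, -(Jc J0 (gaugeT τ σ) A * ∏ i ∈ A, spin (S i))
        * Real.exp (-β * energy (Jc J0 (gaugeT τ σ)) S))
      = ∑ S : V → Bool, -(Jc J0 σ A * ∏ i ∈ A, spin (S i == τ i))
        * Real.exp (-β * energy (Jc J0 σ) (fun i => S i == τ i)) from
    Finset.sum_congr rfl fun S _ => by rw [energy_gaugeT, Jc_gaugeT_mul]]
  exact sum_comp_beq τ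
    (fun S => -(Jc J0 σ A * ∏ i ∈ A, spin (S i)) * Real.exp (-β * energy (Jc J0 σ) S))

lemma Jc_gaugeT_A {V : Type*} (J0 : ℝ) (τ : V → Bool) (σ : Finset V → Bool)
    (A : Finset V) :
    Jc J0 (gaugeT τ σ) A = spin (parity τ A) * Jc J0 σ A := by
  show spin (σ A == parity τ A) * J0 = spin (parity τ A) * (spin (σ A) * J0)
  rw [spin_beq]; ring

lemma Δ_gaugeT {V : Type*} [Fintype V] [DecidableEq V] (β J0 : ℝ)
    (τ : V → Bool) (σ : Finset V → Bool) (A : Finset V) :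
    Δ β (Jc J0 (gaugeT τ σ)) A = Δ β (Jc J0 σ) A := by
  rw [Δ, Δ, eA_gaugeT]
  congr 1
  rcases spin_one_or (parity τ A) with h | h <;> rw [Jc_gaugeT_A, h]
  · rw [one_mul]
  · rw [show (-1 : ℝ) * Jc J0 σ A = -(Jc J0 σ A) by ring,
      show β * -(Jc J0 σ A) = -(β * Jc J0 σ A) by ring, Real.tanh_neg]
    ring

lemma r_gaugeT {V : Type*} [Fintype V] [DecidableEq V] (β J0 : ℝ)
    (τ : V → Bool) (σ : Finset V → Bool) (A : Finset V) :
    Real.sinh (2 * β * Jc J0 (gaugeT τ σ) A) / (2 * Jc J0 (gaugeT τ σ) A)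
      = Real.sinh (2 * β * Jc J0 σ A) / (2 * Jc J0 σ A) := by
  rcases spin_one_or (parity τ A) with h | h <;> rw [Jc_gaugeT_A, h]
  · rw [one_mul]
  · rw [show (-1 : ℝ) * Jc J0 σ A = -(Jc J0 σ A) by ring,
      show 2 * β * -(Jc J0 σ A) = -(2 * β * Jc J0 σ A) by ring, Real.sinh_neg,
      show (2 : ℝ) * -(Jc J0 σ A) = -(2 * Jc J0 σ A) by ring, neg_div_neg_eq]

lemma gaugeT_involutive {V : Type*} (τ : V → Bool) :
    Function.Involutive (gaugeT (V := V) τ) := by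
  intro σ; funext B
  show ((σ B == parity τ B) == parity τ B) = σ B
  cases σ B <;> cases parity τ B <;> rfl

-- ===== probability decomposition =====

lemma prob_eq_exp {V : Type*} [Fintype V] [DecidableEq V] {p βN J0 : ℝ}
    (hpe : p = Real.sqrt (p * (1 - p)) * Real.exp (βN * J0))
    (h1pe : 1 - p = Real.sqrt (p * (1 - p)) * Real.exp (-(βN * J0)))
    (σ : Finset V → Bool) :
    prob p σ = (Real.sqrt (p * (1 - p))) ^ (Fintype.card (Finset V))
      * Real.exp (βN * ∑ B : Finset V, J0 * spin (σ B)) := by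
  rw [prob]
  have h1 : ∀ B : Finset V, (if σ B then p else 1 - p)
      = Real.sqrt (p * (1 - p)) * Real.exp (βN * (J0 * spin (σ B))) := by
    intro B
    cases hσ : σ B
    · rw [if_neg (by simp)]
      rw [show spin false = -1 from rfl, show βN * (J0 * (-1)) = -(βN * J0) by ring]
      exact h1pe
    · rw [if_pos rfl]
      rw [show spin true = 1 from rfl, mul_one]
      exact hpe
  rw [Finset.prod_congr rfl fun B _ => h1 B, Finset.prod_mul_distrib,
    Finset.prod_const, Finset.card_univ, Finset.mul_sum, Real.exp_sum]

lemma sum_J_spin_gaugeT {V : Type*} [Fintype V] [DecidableEq V] (J0 : ℝ)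
    (τ : V → Bool) (σ : Finset V → Bool) :
    ∑ B : Finset V, J0 * spin (gaugeT τ σ B) = -energy (Jc J0 σ) τ := by
  rw [energy, neg_neg]
  refine Finset.sum_congr rfl fun B _ => ?_
  show J0 * spin (σ B == parity τ B) = spin (σ B) * J0 * ∏ i ∈ B, spin (τ i)
  rw [spin_beq, spin_parity]; ring

-- ===== main theorem =====

/-- on the Nishimori line the sign identity specializes, and
the expected sign of `Δ` is nonpositive. -/
theorem sign_identity_nishimori {V : Type*} [Fintype V] [DecidableEq V]
    (J0 p βN : ℝ) (A : Finset V)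
    (hJ : 0 < J0) (hp : 1 / 2 < p) (hp1 : p < 1)
    (hβN : Real.exp (2 * βN * J0) = p / (1 - p))
    (hnz : ∀ σ : Finset V → Bool, Δ βN (Jc J0 σ) A ≠ 0) :
    (-(∑ σ : Finset V → Bool,
          prob p σ * (Δ βN (Jc J0 σ) A / |Δ βN (Jc J0 σ) A|)) =
        ∑ σ : Finset V → Bool,
          prob p σ * (Real.sinh (2 * βN * Jc J0 σ A) / (2 * Jc J0 σ A) *
            |Δ βN (Jc J0 σ) A|)) ∧
      (∑ σ : Finset V → Bool,
          prob p σ * (Δ βN (Jc J0 σ) A / |Δ βN (Jc J0 σ) A|)) ≤ 0 := by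
  have h1p0 : 0 < 1 - p := by linarith
  have hp0 : 0 < p := by linarith
  have hexp2 : Real.exp (2 * (βN * J0)) = p / (1 - p) := by
    rw [show 2 * (βN * J0) = 2 * βN * J0 by ring]; exact hβN
  -- βN > 0
  have hβpos : 0 < βN := by
    have h1 : 1 < p / (1 - p) := by rw [lt_div_iff₀ h1p0]; linarith
    have h2 : 0 < 2 * (βN * J0) := by
      by_contra h
      push_neg at h
      have := Real.exp_le_exp.mpr h
      rw [Real.exp_zero, hexp2] at this
      linarith
    nlinarith
  -- √(p(1-p)) decomposition
  set κ := Real.sqrt (p * (1 - p)) with hκdef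
  have hexp : Real.exp (βN * J0) = Real.sqrt (p / (1 - p)) := by
    have h : Real.sqrt (Real.exp (2 * (βN * J0))) = Real.exp (βN * J0) := by
      rw [show 2 * (βN * J0) = (βN * J0) + (βN * J0) by ring, Real.exp_add,
        Real.sqrt_mul_self (Real.exp_pos _).le]
    rw [← h, hexp2]
  have hpe : p = κ * Real.exp (βN * J0) := by
    rw [hexp, hκdef, ← Real.sqrt_mul (by positivity),
      show p * (1 - p) * (p / (1 - p)) = p ^ 2 by field_simp,
      Real.sqrt_sq hp0.le]
  have h1pe : 1 - p = κ * Real.exp (-(βN * J0)) := by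
    rw [Real.exp_neg, hexp, hκdef, ← Real.sqrt_inv, ← Real.sqrt_mul (by positivity),
      show p * (1 - p) * (p / (1 - p))⁻¹ = (1 - p) ^ 2 by field_simp,
      Real.sqrt_sq h1p0.le]
  -- gauge sum of probabilities
  have prob_gauge_sum : ∀ σ : Finset V → Bool,
      ∑ τ : V → Bool, prob p (gaugeT τ σ)
        = κ ^ (Fintype.card (Finset V)) * Z βN (Jc J0 σ) := by
    intro σ
    have h1 : ∀ τ : V → Bool, prob p (gaugeT τ σ)
        = κ ^ (Fintype.card (Finset V)) * Real.exp (-βN * energy (Jc J0 σ) τ) := by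
      intro τ
      rw [prob_eq_exp hpe h1pe, sum_J_spin_gaugeT,
        show βN * -energy (Jc J0 σ) τ = -βN * energy (Jc J0 σ) τ by ring, hκdef]
    rw [Finset.sum_congr rfl fun τ _ => h1 τ, ← Finset.mul_sum, Z]
  -- the combined summand
  set Q : (Finset V → Bool) → ℝ := fun σ =>
    Δ βN (Jc J0 σ) A / |Δ βN (Jc J0 σ) A|
      + Real.sinh (2 * βN * Jc J0 σ A) / (2 * Jc J0 σ A) * |Δ βN (Jc J0 σ) A|
    with hQdef
  have hQg : ∀ (τ : V → Bool) (σ : Finset V → Bool), Q (gaugeT τ σ) = Q σ := by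
    intro τ σ
    rw [hQdef]
    simp only []
    rw [Δ_gaugeT, r_gaugeT]
  -- main cancellation
  have hQsum : ∑ σ : Finset V → Bool, prob p σ * Q σ = 0 := by
    have hkey : ∑ σ : Finset V → Bool, Q σ * Z βN (Jc J0 σ) = 0 :=
      key_sum βN J0 A hJ.ne' hnz
    have hre : ∀ τ : V → Bool,
        ∑ σ : Finset V → Bool, prob p σ * Q σ
          = ∑ σ : Finset V → Bool, prob p (gaugeT τ σ) * Q (gaugeT τ σ) :=
      fun τ => (Equiv.sum_comp (Function.Involutive.toPerm _ (gaugeT_involutive τ))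
        (fun σ => prob p σ * Q σ)).symm
    have hmain : (2 ^ (Fintype.card V) : ℝ) * ∑ σ : Finset V → Bool, prob p σ * Q σ
        = 0 := by
      calc (2 ^ (Fintype.card V) : ℝ) * ∑ σ : Finset V → Bool, prob p σ * Q σ
          = ∑ _τ : V → Bool, ∑ σ : Finset V → Bool, prob p σ * Q σ := by
            rw [Finset.sum_const, Finset.card_univ, nsmul_eq_mul]
            norm_num
        _ = ∑ τ : V → Bool, ∑ σ : Finset V → Bool,
              prob p (gaugeT τ σ) * Q (gaugeT τ σ) :=
            Finset.sum_congr rfl fun τ _ => hre τ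
        _ = ∑ τ : V → Bool, ∑ σ : Finset V → Bool, prob p (gaugeT τ σ) * Q σ :=
            Finset.sum_congr rfl fun τ _ =>
              Finset.sum_congr rfl fun σ _ => by rw [hQg]
        _ = ∑ σ : Finset V → Bool, (∑ τ : V → Bool, prob p (gaugeT τ σ)) * Q σ := by
            rw [Finset.sum_comm]
            exact Finset.sum_congr rfl fun σ _ => by rw [Finset.sum_mul]
        _ = ∑ σ : Finset V → Bool,
              (κ ^ (Fintype.card (Finset V)) * Z βN (Jc J0 σ)) * Q σ :=
            Finset.sum_congr rfl fun σ _ => by rw [prob_gauge_sum]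
        _ = κ ^ (Fintype.card (Finset V))
              * ∑ σ : Finset V → Bool, Q σ * Z βN (Jc J0 σ) := by
            rw [Finset.mul_sum]
            exact Finset.sum_congr rfl fun σ _ => by ring
        _ = 0 := by rw [hkey, mul_zero]
    have h2 : (2 ^ (Fintype.card V) : ℝ) ≠ 0 := by positivity
    exact (mul_eq_zero.mp hmain).resolve_left h2
  -- split into the two sums
  have hsplit : (∑ σ : Finset V → Bool,
        prob p σ * (Δ βN (Jc J0 σ) A / |Δ βN (Jc J0 σ) A|))
      + ∑ σ : Finset V → Bool,
        prob p σ * (Real.sinh (2 * βN * Jc J0 σ A) / (2 * Jc J0 σ A) *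
          |Δ βN (Jc J0 σ) A|) = 0 := by
    rw [← Finset.sum_add_distrib, ← hQsum]
    exact Finset.sum_congr rfl fun σ _ => by rw [hQdef]; ring
  have hnonneg : 0 ≤ ∑ σ : Finset V → Bool,
      prob p σ * (Real.sinh (2 * βN * Jc J0 σ A) / (2 * Jc J0 σ A) *
        |Δ βN (Jc J0 σ) A|) := by
    refine Finset.sum_nonneg fun σ _ => ?_
    have hprob : 0 ≤ prob p σ :=
      Finset.prod_nonneg fun B _ => by split <;> linarith
    have hr : 0 < Real.sinh (2 * βN * Jc J0 σ A) / (2 * Jc J0 σ A) := by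
      rcases spin_one_or (σ A) with h | h
      · have hJA : Jc J0 σ A = J0 := by show spin (σ A) * J0 = J0; rw [h, one_mul]
        rw [hJA]
        apply div_pos _ (by positivity)
        rw [show 2 * βN * J0 = 2 * (βN * J0) by ring]
        exact Real.sinh_pos_iff.mpr (by positivity)
      · have hJA : Jc J0 σ A = -J0 := by
          show spin (σ A) * J0 = -J0; rw [h]; ring
        rw [hJA, show 2 * βN * -J0 = -(2 * (βN * J0)) by ring, Real.sinh_neg,
          show (2 : ℝ) * -J0 = -(2 * J0) by ring, neg_div_neg_eq]
        exact div_pos (Real.sinh_pos_iff.mpr (by positivity)) (by positivity)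
    exact mul_nonneg hprob (mul_nonneg hr.le (abs_nonneg _))
  exact ⟨by linarith, by linarith⟩
end
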